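/- arXiv:2107.05791 — 9 statements merged into one kernel-verified Lean document; each statement's English description precedes it below -/
import Mathlib

section
/- In the N-node line graph setting of the source-switch experiment, the basic collection algorithm reaches the correct value at time 2N-1: a_0(2N-1) = N. -/
/-- Adjacency in the `N`-node line graph on nodes `0, …, N-1`. -/
def LineAdj (N i j : ℕ) : Prop := (i + 1 = j ∨ j + 1 = i) ∧ i < N ∧ j < N

/-- The source at time `t`: node `N-1` for `t = 0`, node `0` for `t ≥ 1`. -/
def lineSrc (N t : ℕ) : ℕ := if t = 0 then N - 1 else 0

/-- Source switch on the `N`-line from steady state: the basic collection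
algorithm reaches the correct value at time `2N-1`: `a_0(2N-1) = N`. -/
theorem line_switch_correct (N : ℕ) (hN : 2 ≤ N) (dh a : ℕ → ℕ → ℕ) (c : ℕ → ℕ → ℕ)
    (hinit : ∀ i < N, dh 0 i = N - 1 - i ∧ a 0 i = i + 1)
    (hsrc : ∀ t, dh t (lineSrc N t) = 0)
    (hcsrc : ∀ t, c t (lineSrc N t) = lineSrc N t)
    (hc : ∀ t, ∀ i < N, i ≠ lineSrc N t →
      LineAdj N i (c t i) ∧ dh t i = 1 + dh (t - 1) (c t i) ∧
      (∀ k, LineAdj N i k → dh t i ≤ 1 + dh (t - 1) k))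
    (ha : ∀ t, 1 ≤ t → ∀ i < N, a t i =
      1 + ∑ j ∈ (Finset.range N).filter
            (fun j => j ≠ lineSrc N (t - 1) ∧ c (t - 1) j = i), a (t - 1) j) :
    a (2 * N - 1) 0 = N := by
  have hsrc' : ∀ t, 1 ≤ t → lineSrc N t = 0 := by
    intro t ht; unfold lineSrc; rw [if_neg (by omega)]
  -- L1 : lower bound on distances
  have L1 : ∀ t, ∀ i, i < N → i ≤ dh t i ∨ t ≤ dh t i := by
    intro t
    induction t with
    | zero =>
      intro i hi
      right; omega
    | succ t ih =>
      intro i hi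
      rcases Nat.eq_zero_or_pos i with h0 | h1
      · subst h0
        left; omega
      · have hne : i ≠ lineSrc N (t + 1) := by rw [hsrc' (t+1) (by omega)]; omega
        obtain ⟨⟨hadj, _, hcN⟩, heq, _⟩ := hc (t + 1) i hi hne
        have hstep : t + 1 - 1 = t := by omega
        rw [hstep] at heq
        have := ih (c (t + 1) i) hcN
        omega
  -- L2 : settled distances
  have L2 : ∀ t, ∀ i, i < N → i + 1 ≤ t → dh t i = i := by
    intro t
    induction t with
    | zero => intro i _ h; omega
    | succ t ih =>
      intro i hi hit
      rcases Nat.eq_zero_or_pos i with h0 | h1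
      · subst h0
        have := hsrc (t + 1)
        rwa [hsrc' (t+1) (by omega)] at this
      · have hne : i ≠ lineSrc N (t + 1) := by rw [hsrc' (t+1) (by omega)]; omega
        obtain ⟨⟨hadj, _, hcN⟩, heq, hmin⟩ := hc (t + 1) i hi hne
        have hstep : t + 1 - 1 = t := by omega
        rw [hstep] at heq
        have hub := hmin (i - 1) ⟨Or.inr (by omega), hi, by omega⟩
        rw [hstep] at hub
        have hprev : dh t (i - 1) = i - 1 := by
          rcases Nat.eq_zero_or_pos (i - 1) with h2 | h2
          · rw [h2]
            have := hsrc t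
            rwa [hsrc' t (by omega)] at this
          · exact ih (i - 1) (by omega) (by omega)
        have hlow := L1 t (c (t + 1) i) hcN
        omega
  -- L3 : forced constraining nodes
  have L3 : ∀ t, 1 ≤ t → ∀ i, 1 ≤ i → i < N → (i + 1 ≤ t ∨ i = N - 1) →
      c t i = i - 1 := by
    intro t ht i hi1 hiN hyp
    have hne : i ≠ lineSrc N t := by rw [hsrc' t ht]; omega
    obtain ⟨⟨hadj, _, hcN⟩, heq, hmin⟩ := hc t i hiN hne
    rcases hadj with hR | hL
    · -- c t i = i + 1
      exfalso
      have hcval : c t i = i + 1 := hR.symm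
      have hi2 : i + 1 < N := by rw [← hcval]; exact hcN
      have hit : i + 1 ≤ t := by omega
      rw [hcval] at heq
      have hub := hmin (i - 1) ⟨Or.inr (by omega), hiN, by omega⟩
      have hprev : dh (t - 1) (i - 1) = i - 1 := by
        rcases Nat.eq_zero_or_pos (i - 1) with h2 | h2
        · rw [h2]
          have := hsrc (t - 1)
          rwa [hsrc' (t - 1) (by omega)] at this
        · exact L2 (t - 1) (i - 1) (by omega) (by omega)
      have hlow := L1 (t - 1) (i + 1) hi2
      omega
    · omega
  -- L4 : accumulate propagation
  have L4 : ∀ k, k ≤ N - 1 → a (N + k) (N - 1 - k) = k + 1 := by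
    intro k
    induction k with
    | zero =>
      intro _
      have hA := ha N (by omega) (N - 1) (by omega)
      have hfilt : (Finset.range N).filter
          (fun j => j ≠ lineSrc N (N - 1) ∧ c (N - 1) j = N - 1) = ∅ := by
        rw [Finset.filter_eq_empty_iff]
        intro j hj
        rw [Finset.mem_range] at hj
        rw [hsrc' (N - 1) (by omega)]
        rintro ⟨hj0, hcj⟩
        have := L3 (N - 1) (by omega) j (by omega) hj (by omega)
        omega
      rw [hfilt] at hA
      simpa using hA
    | succ k ih =>
      intro hk
      have hA := ha (N + (k + 1)) (by omega) (N - 1 - (k + 1)) (by omega)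
      have hstep : N + (k + 1) - 1 = N + k := by omega
      rw [hstep] at hA
      have hfilt : (Finset.range N).filter
          (fun j => j ≠ lineSrc N (N + k) ∧ c (N + k) j = N - 1 - (k + 1))
          = {N - 1 - k} := by
        ext j
        rw [Finset.mem_filter, Finset.mem_range, Finset.mem_singleton,
          hsrc' (N + k) (by omega)]
        constructor
        · rintro ⟨hj, hj0, hcj⟩
          have := L3 (N + k) (by omega) j (by omega) hj (by omega)
          omega
        · intro hj
          subst hj
          have := L3 (N + k) (by omega) (N - 1 - k) (by omega) (by omega)
            (by omega)
          refine ⟨by omega, by omega, by omega⟩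
      rw [hfilt, Finset.sum_singleton, ih (by omega)] at hA
      omega
  have := L4 (N - 1) (le_refl _)
  have h1 : N + (N - 1) = 2 * N - 1 := by omega
  have h2 : N - 1 - (N - 1) = 0 := by omega
  rw [h1, h2] at this
  omega
end

section
/- Let G be a connected graph with old source D-1 and new source 0 (which are at distance ≥ 3 apart), initialized at the steady state for source D-1. Under the ABF update with source 0 for t ≥ 1, every node i with d(0,i) = m < t satisfies d̂_i(t) = m. -/
/-- Source switch from old source `o` (= node `D-1`) to new source `z` (= node `0`)
with `d(z,o) ≥ 3`, starting from the steady state for source `o`: under the ABF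
update with source `z` for `t ≥ 1`, every node `i` with `d(z,i) < t` satisfies
`d̂_i(t) = d(z,i)`. -/
theorem abf_switch_converged_region {V : Type*} [Fintype V] [DecidableEq V]
    (G : SimpleGraph V) [DecidableRel G.Adj] (hconn : G.Connected) (z o : V)
    (hzo : 3 ≤ G.dist z o)
    (hne : ∀ i : V, (G.neighborFinset i).Nonempty)
    (dh : ℕ → V → ℕ)
    (hinit : ∀ i, dh 0 i = G.dist o i)
    (hsrc : ∀ t, 1 ≤ t → dh t z = 0)
    (hupd : ∀ t, 1 ≤ t → ∀ i, i ≠ z →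
      dh t i = 1 + (G.neighborFinset i).inf' (hne i) (fun j => dh (t - 1) j)) :
    ∀ t, 1 ≤ t → ∀ i, G.dist z i < t → dh t i = G.dist z i := by
  -- adjacency implies distances to a fixed vertex differ by at most one
  have hadj : ∀ (u i j : V), G.Adj i j → G.dist u i ≤ G.dist u j + 1 := by
    intro u i j h
    calc G.dist u i ≤ G.dist u j + G.dist j i := hconn.dist_triangle
    _ ≤ G.dist u j + 1 := by
        have hw := SimpleGraph.dist_le (SimpleGraph.Walk.cons h.symm SimpleGraph.Walk.nil)
        simp at hw
        omega
  -- lower bound lemma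
  have lb : ∀ t i, min (G.dist z i) t ≤ dh t i := by
    intro t
    induction t with
    | zero => intro i; simp
    | succ t ih =>
      intro i
      by_cases hiz : i = z
      · subst hiz
        simp [hsrc (t + 1) (by omega)]
      · rw [hupd (t + 1) (by omega) i hiz]
        simp only [Nat.add_sub_cancel]
        obtain ⟨j, hj, hje⟩ := Finset.exists_mem_eq_inf' (hne i) (fun k => dh t k)
        rw [hje]
        rw [SimpleGraph.mem_neighborFinset] at hj
        have h1 := hadj z i j hj
        have h3 := ih j
        simp only [min_def] at *
        split at h3 <;> split <;> omega
  intro t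
  induction t with
  | zero => omega
  | succ t ih =>
    intro _ i hi
    by_cases hiz : i = z
    · subst hiz
      rw [hsrc (t + 1) (by omega), SimpleGraph.dist_self]
    · have hm : 1 ≤ G.dist z i := by
        rcases Nat.eq_zero_or_pos (G.dist z i) with h0 | h0
        · exact absurd (hconn.dist_eq_zero_iff.mp h0).symm hiz
        · exact h0
      -- find a neighbor j with dist z j = dist z i - 1
      obtain ⟨p, hp⟩ := (hconn i z).exists_walk_length_eq_dist
      have hpl : p.length = G.dist z i := by rw [hp, SimpleGraph.dist_comm]
      cases p with
      | nil => exact absurd rfl hiz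
      | cons h q =>
        rename_i j
        have hdj : G.dist z j = G.dist z i - 1 := by
          have h1 : G.dist z j ≤ G.dist z i - 1 := by
            have := SimpleGraph.dist_le q
            rw [SimpleGraph.dist_comm]
            simp [SimpleGraph.Walk.length_cons] at hpl
            omega
          have h2 := hadj z i j h
          omega
        have hdjt : G.dist z j < t := by omega
        have ht1 : 1 ≤ t := by omega
        have hIH := ih ht1 j hdjt
        rw [hupd (t + 1) (by omega) i hiz]
        simp only [Nat.add_sub_cancel]
        have hjm : j ∈ G.neighborFinset i := by
          rw [SimpleGraph.mem_neighborFinset]; exact h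
        have hub : (G.neighborFinset i).inf' (hne i) (fun k => dh t k) ≤ G.dist z i - 1 := by
          calc _ ≤ dh t j := Finset.inf'_le _ hjm
          _ = G.dist z j := hIH
          _ = G.dist z i - 1 := hdj
        have hlb : G.dist z i - 1 ≤ (G.neighborFinset i).inf' (hne i) (fun k => dh t k) := by
          obtain ⟨k, hk, hke⟩ := Finset.exists_mem_eq_inf' (hne i) (fun k => dh t k)
          rw [hke]
          rw [SimpleGraph.mem_neighborFinset] at hk
          have h1 := hadj z i k hk
          have h2 := lb t k
          simp only [min_def] at h2
          split at h2 <;> omega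
        omega
end

section
/- In the post-source-switch ABF evolution, any node i not yet reached by either wave — i.e., with d(0,i) ≥ t and d(D-1,i) ≥ t — retains its old correct distance: d̂_i(t) = d(D-1,i). -/
lemma exists_adj_dist_pred {V : Type*} (G : SimpleGraph V) (hconn : G.Connected) (o i : V)
    (h : G.dist o i ≠ 0) : ∃ j, G.Adj i j ∧ G.dist o j + 1 = G.dist o i := by
  obtain ⟨p, hp⟩ := SimpleGraph.exists_walk_of_dist_ne_zero h
  have hrev : (p.reverse).length = G.dist o i := by simp [hp]
  cases hq : p.reverse with
  | nil => rw [hq] at hrev; simp at hrev; simp at h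
  | cons hadj q =>
    rename_i j
    refine ⟨j, hadj, le_antisymm ?_ ?_⟩
    · have h1 : G.dist o j ≤ q.reverse.length := SimpleGraph.dist_le _
      have h2 : q.length + 1 = G.dist o i := by
        rw [hq] at hrev; simpa using hrev
      simp at h1; omega
    · have htri : G.dist o i ≤ G.dist o j + G.dist j i :=
        hconn.dist_triangle
      have : G.dist j i = 1 := by
        rw [SimpleGraph.dist_comm, SimpleGraph.dist_eq_one_iff_adj]; exact hadj
      omega

/-- Source switch from old source `o` to new source `z` with `d(z,o) ≥ 3`:
any node not yet reached by either wave, i.e. with `d(z,i) ≥ t` and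
`d(o,i) ≥ t`, retains its old correct distance: `d̂_i(t) = d(o,i)`. -/
theorem abf_switch_untouched_region {V : Type*} [Fintype V] [DecidableEq V]
    (G : SimpleGraph V) [DecidableRel G.Adj] (hconn : G.Connected) (z o : V)
    (hzo : 3 ≤ G.dist z o)
    (hne : ∀ i : V, (G.neighborFinset i).Nonempty)
    (dh : ℕ → V → ℕ)
    (hinit : ∀ i, dh 0 i = G.dist o i)
    (hsrc : ∀ t, 1 ≤ t → dh t z = 0)
    (hupd : ∀ t, 1 ≤ t → ∀ i, i ≠ z →
      dh t i = 1 + (G.neighborFinset i).inf' (hne i) (fun j => dh (t - 1) j)) :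
    ∀ t, 1 ≤ t → ∀ i, t ≤ G.dist z i → t ≤ G.dist o i → dh t i = G.dist o i := by
  have key : ∀ t, ∀ i, t ≤ G.dist z i → t ≤ G.dist o i → dh t i = G.dist o i := by
    intro t
    induction t with
    | zero => intro i _ _; exact hinit i
    | succ t ih =>
      intro i hzi hoi
      have hiz : i ≠ z := by
        rintro rfl; simp [SimpleGraph.dist_self] at hzi
      rw [hupd (t + 1) (by omega) i hiz]
      simp only [Nat.add_sub_cancel]
      have hprev : ∀ j ∈ G.neighborFinset i, dh t j = G.dist o j := by
        intro j hj
        rw [SimpleGraph.mem_neighborFinset] at hj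
        have h1 : G.dist z i ≤ G.dist z j + 1 := by
          have := hconn.dist_triangle (G := G) (u := z) (v := j) (w := i)
          have : G.dist j i = 1 := by
            rw [SimpleGraph.dist_comm, SimpleGraph.dist_eq_one_iff_adj]; exact hj
          omega
        have h2 : G.dist o i ≤ G.dist o j + 1 := by
          have := hconn.dist_triangle (G := G) (u := o) (v := j) (w := i)
          have : G.dist j i = 1 := by
            rw [SimpleGraph.dist_comm, SimpleGraph.dist_eq_one_iff_adj]; exact hj
          omega
        exact ih j (by omega) (by omega)
      have hinf : (G.neighborFinset i).inf' (hne i) (fun j => dh t j)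
          = G.dist o i - 1 := by
        obtain ⟨j0, hadj, hj0⟩ := exists_adj_dist_pred G hconn o i (by omega)
        have hj0mem : j0 ∈ G.neighborFinset i := by
          rw [SimpleGraph.mem_neighborFinset]; exact hadj
        apply le_antisymm
        · calc (G.neighborFinset i).inf' (hne i) (fun j => dh t j) ≤ dh t j0 :=
                Finset.inf'_le _ hj0mem
            _ = G.dist o i - 1 := by rw [hprev j0 hj0mem]; omega
        · apply Finset.le_inf'
          intro j hj
          rw [hprev j hj]
          rw [SimpleGraph.mem_neighborFinset] at hj
          have := hconn.dist_triangle (G := G) (u := o) (v := j) (w := i)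
          have : G.dist j i = 1 := by
            rw [SimpleGraph.dist_comm, SimpleGraph.dist_eq_one_iff_adj]; exact hj
          omega
      rw [hinf]
      omega
  intro t _ i hzi hoi
  exact key t i hzi hoi
end

section
/- In the post-source-switch ABF evolution, any node i in I_1(t) = {i : d(D-1,i) < t and d(0,i) ≥ t} has distance estimate d̂_i(t) ∈ {t, t+1}. -/
private lemma closer_neighbor {V : Type*} [Fintype V] [DecidableEq V]
    (G : SimpleGraph V) [DecidableRel G.Adj] (hconn : G.Connected) (o i : V)
    (h : 1 ≤ G.dist o i) :
    ∃ j ∈ G.neighborFinset i, G.dist o j + 1 ≤ G.dist o i := by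
  obtain ⟨p, hp⟩ := hconn.exists_walk_length_eq_dist i o
  cases p with
  | nil => simp [SimpleGraph.dist_self] at h
  | cons hadj q =>
      rename_i j
      refine ⟨j, by simpa [SimpleGraph.mem_neighborFinset] using hadj, ?_⟩
      have h1 : G.dist j o ≤ q.length := SimpleGraph.dist_le q
      simp only [SimpleGraph.Walk.length_cons] at hp
      have hc1 : G.dist j o = G.dist o j := SimpleGraph.dist_comm
      have hc2 : G.dist i o = G.dist o i := SimpleGraph.dist_comm
      omega

private lemma lower_bd {V : Type*} [Fintype V] [DecidableEq V]
    (G : SimpleGraph V) [DecidableRel G.Adj] (hconn : G.Connected) (z : V)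
    (hne : ∀ i : V, (G.neighborFinset i).Nonempty)
    (dh : ℕ → V → ℕ)
    (hsrc : ∀ t, 1 ≤ t → dh t z = 0)
    (hupd : ∀ t, 1 ≤ t → ∀ i, i ≠ z →
      dh t i = 1 + (G.neighborFinset i).inf' (hne i) (fun j => dh (t - 1) j)) :
    ∀ t i, min t (G.dist z i) ≤ dh t i := by
  intro t
  induction t with
  | zero => intro i; simp
  | succ t ih =>
      intro i
      by_cases hiz : i = z
      · subst hiz
        rw [hsrc (t+1) (by omega), SimpleGraph.dist_self]
        simp
      · rw [hupd (t+1) (by omega) i hiz]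
        obtain ⟨j, hj, hjeq⟩ := Finset.exists_mem_eq_inf' (hne i) (fun j => dh (t+1-1) j)
        simp only [Nat.add_sub_cancel] at hjeq ⊢
        rw [hjeq]
        have hadj : G.Adj i j := (SimpleGraph.mem_neighborFinset G i j).mp hj
        have htri : G.dist z i ≤ G.dist z j + 1 := by
          have := hconn.dist_triangle (u := z) (v := j) (w := i)
          have : G.dist j i = 1 := SimpleGraph.dist_eq_one_iff_adj.mpr hadj.symm
          have := hconn.dist_triangle (u := z) (v := j) (w := i)
          omega
        have := ih j
        omega

private lemma upper_bd {V : Type*} [Fintype V] [DecidableEq V]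
    (G : SimpleGraph V) [DecidableRel G.Adj] (hconn : G.Connected) (z o : V)
    (hne : ∀ i : V, (G.neighborFinset i).Nonempty)
    (dh : ℕ → V → ℕ)
    (hinit : ∀ i, dh 0 i = G.dist o i)
    (hsrc : ∀ t, 1 ≤ t → dh t z = 0)
    (hupd : ∀ t, 1 ≤ t → ∀ i, i ≠ z →
      dh t i = 1 + (G.neighborFinset i).inf' (hne i) (fun j => dh (t - 1) j)) :
    ∀ t i, G.dist o i ≤ t + 1 → dh t i ≤ t + 1 := by
  intro t
  induction t with
  | zero => intro i h; rw [hinit]; omega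
  | succ t ih =>
      intro i h
      by_cases hiz : i = z
      · subst hiz; rw [hsrc (t+1) (by omega)]; omega
      · rw [hupd (t+1) (by omega) i hiz]
        simp only [Nat.add_sub_cancel]
        -- find a neighbor j with dist o j ≤ t+1
        obtain ⟨j, hj, hjd⟩ : ∃ j ∈ G.neighborFinset i, G.dist o j ≤ t + 1 := by
          by_cases h0 : 1 ≤ G.dist o i
          · obtain ⟨j, hj, hjd⟩ := closer_neighbor G hconn o i h0
            exact ⟨j, hj, by omega⟩
          · have : i = o := ((hconn.dist_eq_zero_iff).mp (by omega)).symm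
            subst this
            obtain ⟨j, hj⟩ := hne i
            have hadj : G.Adj i j := (SimpleGraph.mem_neighborFinset G i j).mp hj
            exact ⟨j, hj, by rw [SimpleGraph.dist_eq_one_iff_adj.mpr hadj]; omega⟩
        have h1 : (G.neighborFinset i).inf' (hne i) (fun j => dh t j) ≤ dh t j :=
          Finset.inf'_le _ hj
        have h2 : dh t j ≤ t + 1 := ih j hjd
        omega

/-- Source switch from old source `o` to new source `z` with `d(z,o) ≥ 3`:
any node in `I_1(t) = {i : d(o,i) < t and d(z,i) ≥ t}` has distance estimate
`d̂_i(t) ∈ {t, t+1}`. -/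
theorem abf_switch_middle_region {V : Type*} [Fintype V] [DecidableEq V]
    (G : SimpleGraph V) [DecidableRel G.Adj] (hconn : G.Connected) (z o : V)
    (hzo : 3 ≤ G.dist z o)
    (hne : ∀ i : V, (G.neighborFinset i).Nonempty)
    (dh : ℕ → V → ℕ)
    (hinit : ∀ i, dh 0 i = G.dist o i)
    (hsrc : ∀ t, 1 ≤ t → dh t z = 0)
    (hupd : ∀ t, 1 ≤ t → ∀ i, i ≠ z →
      dh t i = 1 + (G.neighborFinset i).inf' (hne i) (fun j => dh (t - 1) j)) :
    ∀ t, 1 ≤ t → ∀ i, G.dist o i < t → t ≤ G.dist z i →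
      dh t i = t ∨ dh t i = t + 1 := by
  intro t ht i hoi hzi
  have hlow := lower_bd G hconn z hne dh hsrc hupd t i
  have hup := upper_bd G hconn z o hne dh hinit hsrc hupd t i (by omega)
  omega
end

section
/- Under monotonic filtering after the source switch, every node i in I_1(t) = {i : d(D-1,i) < t, d(0,i) ≥ t} has empty child set C_i(t), and hence accumulate a_i(t) = 1. -/
private lemma step_closer {V : Type*} (G : SimpleGraph V) (hconn : G.Connected)
    (o i : V) (h : 1 ≤ G.dist o i) :
    ∃ j, G.Adj i j ∧ G.dist o j + 1 = G.dist o i := by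
  obtain ⟨p, hp⟩ := hconn.exists_walk_length_eq_dist i o
  cases p with
  | nil =>
      simp only [SimpleGraph.Walk.length_nil] at hp
      rw [SimpleGraph.dist_comm] at h
      omega
  | cons hadj q =>
      rename_i j
      refine ⟨j, hadj, ?_⟩
      have h1 : G.dist j o ≤ q.length := SimpleGraph.dist_le q
      simp only [SimpleGraph.Walk.length_cons] at hp
      have h2 : G.dist o j ≤ G.dist o i - 1 := by
        rw [SimpleGraph.dist_comm]
        rw [SimpleGraph.dist_comm] at hp
        omega
      have h3 : G.dist o i ≤ G.dist o j + G.dist j i := hconn.dist_triangle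
      have h4 : G.dist j i = 1 := SimpleGraph.dist_eq_one_iff_adj.mpr hadj.symm
      omega

/-- Monotonic filtering after a source switch from `o` to `z` (`d(z,o) ≥ 3`):
every node `i ∈ I_1(t) = {i : d(o,i) < t, d(z,i) ≥ t}` has empty child set
`C_i(t) = {j : c_j(t-1) = i ∧ d̂_j(t-1) = d̂_i(t) + 1}`, hence `a_i(t) = 1`. -/
theorem monotonic_filtering_I1 {V : Type*} [Fintype V] [DecidableEq V]
    (G : SimpleGraph V) [DecidableRel G.Adj] (hconn : G.Connected) (z o : V)
    (hzo : 3 ≤ G.dist z o)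
    (hne : ∀ i : V, (G.neighborFinset i).Nonempty)
    (dh : ℕ → V → ℕ) (c : ℕ → V → V) (a : ℕ → V → ℕ)
    (hinit : ∀ i, dh 0 i = G.dist o i)
    (hsrc : ∀ t, 1 ≤ t → dh t z = 0)
    (hupd : ∀ t, 1 ≤ t → ∀ i, i ≠ z →
      dh t i = 1 + (G.neighborFinset i).inf' (hne i) (fun j => dh (t - 1) j))
    (hc0s : c 0 o = o)
    (hc0 : ∀ i, i ≠ o → G.Adj i (c 0 i) ∧ dh 0 i = 1 + dh 0 (c 0 i))
    (hcs : ∀ t, 1 ≤ t → c t z = z)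
    (hc : ∀ t, 1 ≤ t → ∀ i, i ≠ z →
      G.Adj i (c t i) ∧ dh t i = 1 + dh (t - 1) (c t i))
    (ha : ∀ t, 1 ≤ t → ∀ i, a t i = 1 +
      ∑ j ∈ Finset.univ.filter
          (fun j => c (t - 1) j = i ∧ dh (t - 1) j = dh t i + 1), a (t - 1) j) :
    ∀ t, 1 ≤ t → ∀ i, G.dist o i < t → t ≤ G.dist z i →
      Finset.univ.filter
          (fun j => c (t - 1) j = i ∧ dh (t - 1) j = dh t i + 1) = ∅ ∧
      a t i = 1 := by
  -- Lower bound: before the wave from `z` arrives, estimates are at least `s`.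
  have L1 : ∀ s i, s ≤ G.dist z i → s ≤ dh s i := by
    intro s
    induction s with
    | zero => intro i _; exact Nat.zero_le _
    | succ s ih =>
      intro i hi
      have hiz : i ≠ z := by
        rintro rfl
        simp [SimpleGraph.dist_self] at hi
      rw [hupd (s + 1) (by omega) i hiz]
      simp only [Nat.add_sub_cancel]
      have hinf : s ≤ (G.neighborFinset i).inf' (hne i) fun j => dh s j := by
        apply Finset.le_inf'
        intro j hj
        apply ih
        have hadj : G.Adj i j := by rwa [SimpleGraph.mem_neighborFinset] at hj
        have h3 : G.dist z i ≤ G.dist z j + G.dist j i := hconn.dist_triangle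
        have h4 : G.dist j i = 1 := SimpleGraph.dist_eq_one_iff_adj.mpr hadj.symm
        omega
      omega
  -- Upper bound.
  have L2 : ∀ s i, dh s i ≤ G.dist o i ∨ dh s i ≤ s + 1 := by
    intro s
    induction s with
    | zero => intro i; left; rw [hinit]
    | succ s ih =>
      intro i
      by_cases hiz : i = z
      · subst hiz
        right
        rw [hsrc (s + 1) (by omega)]
        omega
      · rw [hupd (s + 1) (by omega) i hiz]
        simp only [Nat.add_sub_cancel]
        by_cases hio : i = o
        · obtain ⟨j, hj⟩ := hne i
          have hle : (G.neighborFinset i).inf' (hne i) (fun j => dh s j) ≤ dh s j :=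
            Finset.inf'_le _ hj
          have hadj : G.Adj i j := by rwa [SimpleGraph.mem_neighborFinset] at hj
          rw [hio] at hadj
          have hdj : G.dist o j = 1 := SimpleGraph.dist_eq_one_iff_adj.mpr hadj
          rcases ih j with h | h <;> right <;> omega
        · have h1 : 1 ≤ G.dist o i := hconn.pos_dist_of_ne (fun h => hio h.symm)
          obtain ⟨j, hadj, hjd⟩ := step_closer G hconn o i h1
          have hle : (G.neighborFinset i).inf' (hne i) (fun j => dh s j) ≤ dh s j :=
            Finset.inf'_le _ (by rwa [SimpleGraph.mem_neighborFinset])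
          rcases ih j with h | h
          · left; omega
          · right; omega
  intro t ht i hoi hzi
  have hiz : i ≠ z := by
    rintro rfl
    simp [SimpleGraph.dist_self] at hzi
    omega
  have hL1 : t ≤ dh t i := L1 t i hzi
  have hfilter : Finset.univ.filter
      (fun j => c (t - 1) j = i ∧ dh (t - 1) j = dh t i + 1) = ∅ := by
    rw [Finset.filter_eq_empty_iff]
    rintro j - ⟨hcj, hdj⟩
    by_cases ht1 : t = 1
    · subst ht1
      have hio : i = o := by
        have h0 : G.dist o i = 0 := by omega
        exact (hconn.dist_eq_zero_iff.mp h0).symm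
      simp only [Nat.sub_self] at hcj hdj
      rw [hio] at hcj hdj
      by_cases hjo : j = o
      · subst hjo
        rw [hinit, SimpleGraph.dist_self] at hdj
        omega
      · obtain ⟨hadj, heq⟩ := hc0 j hjo
        rw [hcj] at heq
        rw [hinit, hinit, SimpleGraph.dist_self] at heq
        rw [hinit] at hdj
        have h1 : 1 ≤ dh 1 o := L1 1 o (by omega)
        omega
    · have hjz : j ≠ z := by
        rintro rfl
        rw [hcs (t - 1) (by omega)] at hcj
        exact hiz hcj.symm
      obtain ⟨-, heq⟩ := hc (t - 1) (by omega) j hjz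
      rw [hcj] at heq
      have ht11 : t - 1 - 1 = t - 2 := by omega
      rw [ht11] at heq
      rcases L2 (t - 2) i with h | h <;> omega
  refine ⟨hfilter, ?_⟩
  rw [ha t ht i, hfilter, Finset.sum_empty]
  rfl
end

section
/- Under monotonic filtering after the source switch, the total stale accumulate flowing from the untouched region into the converged region in one step is at most N: the sum over i ∈ I_0(t) and j ∈ C_i(t) ∩ I_2(t) of a_j(t-1) is at most N, where N = |V|. -/
/-- Monotonic filtering after a source switch from `o` to `z` (`d(z,o) ≥ 3`),
initialized at the steady state for source `o` (so that each level sum of the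
initial accumulates is at most `N`): the total stale accumulate flowing from the
untouched region `I_2(t)` into the converged region `I_0(t)` in one step is at
most `N = |V|`. -/
theorem monotonic_filtering_stale_flow {V : Type*} [Fintype V] [DecidableEq V]
    (G : SimpleGraph V) [DecidableRel G.Adj] (hconn : G.Connected) (z o : V)
    (hzo : 3 ≤ G.dist z o)
    (hne : ∀ i : V, (G.neighborFinset i).Nonempty)
    (dh : ℕ → V → ℕ) (c : ℕ → V → V) (a : ℕ → V → ℕ)
    (hinit : ∀ i, dh 0 i = G.dist o i)
    (hsrc : ∀ t, 1 ≤ t → dh t z = 0)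
    (hupd : ∀ t, 1 ≤ t → ∀ i, i ≠ z →
      dh t i = 1 + (G.neighborFinset i).inf' (hne i) (fun j => dh (t - 1) j))
    (hc0s : c 0 o = o)
    (hc0 : ∀ i, i ≠ o → G.Adj i (c 0 i) ∧ dh 0 i = 1 + dh 0 (c 0 i))
    (hcs : ∀ t, 1 ≤ t → c t z = z)
    (hc : ∀ t, 1 ≤ t → ∀ i, i ≠ z →
      G.Adj i (c t i) ∧ dh t i = 1 + dh (t - 1) (c t i))
    (ha : ∀ t i, a t i = 1 +
      ∑ j ∈ Finset.univ.filter
          (fun j => c (t - 1) j = i ∧ dh (t - 1) j = dh t i + 1), a (t - 1) j)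
    (hlevel : ∀ m : ℕ,
      ∑ j ∈ Finset.univ.filter (fun j => G.dist o j = m), a 0 j ≤ Fintype.card V) :
    ∀ t, 1 ≤ t →
      ∑ i ∈ Finset.univ.filter (fun i => G.dist z i < t),
        ∑ j ∈ Finset.univ.filter
            (fun j => (c (t - 1) j = i ∧ dh (t - 1) j = dh t i + 1) ∧
              t ≤ G.dist z j ∧ t ≤ G.dist o j), a (t - 1) j
      ≤ Fintype.card V := by
  -- basic distance facts
  have hdistlt : ∀ u v' : V, G.dist u v' < Fintype.card V := by
    intro u v'
    obtain ⟨p⟩ := hconn.preconnected u v'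
    exact lt_of_le_of_lt (G.dist_le (p.toPath : G.Walk u v')) p.toPath.2.length_lt
  have htri : ∀ u x y : V, G.Adj x y → G.dist u x ≤ G.dist u y + 1 := by
    intro u x y h
    have h1 := hconn.dist_triangle (u := u) (v := y) (w := x)
    have h2 : G.dist y x = 1 := SimpleGraph.dist_eq_one_iff_adj.mpr h.symm
    omega
  have hstep : ∀ u x : V, 1 ≤ G.dist u x → ∃ y, G.Adj x y ∧ G.dist u y + 1 = G.dist u x := by
    intro u x h
    obtain ⟨p, hp⟩ := (hconn.preconnected x u).exists_walk_length_eq_dist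
    have hlen : p.length = G.dist u x := by rw [hp, SimpleGraph.dist_comm]
    have hnil : ¬ p.Nil := by
      rw [SimpleGraph.Walk.not_nil_iff_lt_length]; omega
    refine ⟨p.getVert 1, p.adj_snd hnil, ?_⟩
    have h1 : G.dist u (p.getVert 1) ≤ p.tail.length := by
      rw [SimpleGraph.dist_comm]; exact G.dist_le p.tail
    have h2 : p.tail.length + 1 = p.length := SimpleGraph.Walk.length_tail_add_one hnil
    have h3 := htri u x (p.getVert 1) (p.adj_snd hnil)
    omega
  -- convenient update form
  have hdh : ∀ s (x : V), x ≠ z →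
      dh (s + 1) x = 1 + (G.neighborFinset x).inf' (hne x) (fun j => dh s j) := by
    intro s x hx
    simpa using hupd (s + 1) (by omega) x hx
  -- lower-bound invariants
  have H : ∀ s (x : V),
      (G.dist o x ≤ dh s x ∨ (G.dist z x ≤ dh s x ∧ dh s x + 1 ≤ s)) ∧
      (G.dist z x ≤ dh s x ∨ s ≤ dh s x) := by
    intro s
    induction s with
    | zero =>
      intro x
      rw [hinit]
      exact ⟨Or.inl le_rfl, Or.inr (Nat.zero_le _)⟩
    | succ n ih =>
      intro x
      by_cases hx : x = z
      · subst hx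
        rw [hsrc (n + 1) (by omega)]
        simp [SimpleGraph.dist_self]
      · rw [hdh n x hx]
        obtain ⟨k, hk, hkeq⟩ := Finset.exists_mem_eq_inf' (hne x) (fun j => dh n j)
        rw [hkeq]
        have hadj : G.Adj x k := by rwa [← SimpleGraph.mem_neighborFinset]
        obtain ⟨ih1, ih2⟩ := ih k
        have t1 := htri o x k hadj
        have t2 := htri z x k hadj
        constructor
        · rcases ih1 with h | ⟨h1, h2⟩
          · exact Or.inl (by omega)
          · exact Or.inr ⟨by omega, by omega⟩
        · rcases ih2 with h | h
          · exact Or.inl (by omega)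
          · exact Or.inr (by omega)
  -- converged region: dh equals distance to z
  have hAub : ∀ s (x : V), G.dist z x + 1 ≤ s → dh s x ≤ G.dist z x := by
    intro s
    induction s with
    | zero => intro x h; omega
    | succ n ih =>
      intro x h
      by_cases hx : x = z
      · subst hx; rw [hsrc (n + 1) (by omega)]; exact Nat.zero_le _
      · have hdzx : 1 ≤ G.dist z x := hconn.pos_dist_of_ne (Ne.symm hx)
        obtain ⟨y, hady, hdy⟩ := hstep z x hdzx
        have hyih : dh n y ≤ G.dist z y := ih y (by omega)
        rw [hdh n x hx]
        have h5 : (G.neighborFinset x).inf' (hne x) (fun j => dh n j) ≤ dh n y :=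
          Finset.inf'_le _ (by rwa [SimpleGraph.mem_neighborFinset])
        omega
  have hA : ∀ s (x : V), G.dist z x + 1 ≤ s → dh s x = G.dist z x := by
    intro s x h
    have h1 := hAub s x h
    rcases (H s x).2 with h2 | h2 <;> omega
  -- untouched region: dh equals old distance to o
  have hEub : ∀ s (x : V), s ≤ G.dist z x → s ≤ G.dist o x → dh s x ≤ G.dist o x := by
    intro s
    induction s with
    | zero => intro x _ _; rw [hinit]
    | succ n ih =>
      intro x h1 h2
      have hx : x ≠ z := by
        intro he; subst he; rw [SimpleGraph.dist_self] at h1; omega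
      obtain ⟨y, hady, hdy⟩ := hstep o x (by omega)
      have t2 := htri z x y hady
      have hyih : dh n y ≤ G.dist o y := ih y (by omega) (by omega)
      rw [hdh n x hx]
      have h5 : (G.neighborFinset x).inf' (hne x) (fun j => dh n j) ≤ dh n y :=
        Finset.inf'_le _ (by rwa [SimpleGraph.mem_neighborFinset])
      omega
  have hE : ∀ s (x : V), s ≤ G.dist z x → s ≤ G.dist o x → dh s x = G.dist o x := by
    intro s x h1 h2
    have hu := hEub s x h1 h2
    rcases (H s x).1 with h3 | ⟨h3, h4⟩ <;> omega
  -- counting lemma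
  have hP : ∀ f m s (F : Finset V),
      Fintype.card V ≤ m + f →
      (∀ j ∈ F, G.dist o j = m ∧ s ≤ G.dist z j ∧ s < m) →
      ∑ j ∈ F, a s j ≤ (Finset.univ.filter (fun x => m ≤ G.dist o x)).card := by
    intro f
    induction f with
    | zero =>
      intro m s F hcard hF
      have hFe : F = ∅ := by
        apply Finset.eq_empty_of_forall_notMem
        intro j hj
        have h1 := (hF j hj).1
        have h2 := hdistlt o j
        omega
      simp [hFe]
    | succ f ih =>
      intro m s F hcard hF
      have hdhsj : ∀ j ∈ F, dh s j = m := by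
        intro j hj
        obtain ⟨h1, h2, h3⟩ := hF j hj
        rcases Nat.eq_zero_or_pos s with hs | hs
        · subst hs; rw [hinit, h1]
        · rw [hE s j h2 (by omega), h1]
      have hsum : ∑ j ∈ F, a s j = F.card +
          ∑ j ∈ F, ∑ k ∈ Finset.univ.filter
            (fun k => c (s - 1) k = j ∧ dh (s - 1) k = dh s j + 1), a (s - 1) k := by
        rw [Finset.sum_congr rfl (fun j _ => ha s j), Finset.sum_add_distrib,
          Finset.sum_const, smul_eq_mul, mul_one]
      have hdisj : (↑F : Set V).PairwiseDisjoint
          (fun j => Finset.univ.filter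
            (fun k => c (s - 1) k = j ∧ dh (s - 1) k = dh s j + 1)) := by
        intro j1 _ j2 _ hne'
        rw [Function.onFun, Finset.disjoint_left]
        intro x hx1 hx2
        rw [Finset.mem_filter] at hx1 hx2
        exact hne' (hx1.2.1 ▸ hx2.2.1)
      have hsum2 : ∑ j ∈ F, ∑ k ∈ Finset.univ.filter
            (fun k => c (s - 1) k = j ∧ dh (s - 1) k = dh s j + 1), a (s - 1) k
          = ∑ k ∈ F.biUnion (fun j => Finset.univ.filter
            (fun k => c (s - 1) k = j ∧ dh (s - 1) k = dh s j + 1)), a (s - 1) k :=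
        (Finset.sum_biUnion hdisj).symm
      have hF'prop : ∀ k ∈ F.biUnion (fun j => Finset.univ.filter
            (fun k => c (s - 1) k = j ∧ dh (s - 1) k = dh s j + 1)),
          G.dist o k = m + 1 ∧ s - 1 ≤ G.dist z k ∧ s - 1 < m + 1 := by
        intro k hk
        rw [Finset.mem_biUnion] at hk
        obtain ⟨j, hjF, hk⟩ := hk
        rw [Finset.mem_filter] at hk
        obtain ⟨-, hck, hdk⟩ := hk
        rw [hdhsj j hjF] at hdk
        obtain ⟨h1, h2, h3⟩ := hF j hjF
        rcases Nat.lt_or_ge s 2 with hs | hs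
        · have hs0 : s - 1 = 0 := by omega
          rw [hs0] at hdk ⊢
          rw [hinit] at hdk
          exact ⟨hdk, Nat.zero_le _, by omega⟩
        · have hkz : k ≠ z := by
            intro he; subst he
            rw [hsrc (s - 1) (by omega)] at hdk; omega
          have hadj : G.Adj k j := by
            have := (hc (s - 1) (by omega) k hkz).1
            rwa [hck] at this
          have t1 := htri o j k hadj.symm
          have t2 := htri z j k hadj.symm
          have he := hE (s - 1) k (by omega) (by omega)
          exact ⟨by omega, by omega, by omega⟩
      have hIH := ih (m + 1) (s - 1) _ (by omega) hF'prop
      have hsub : F ∪ Finset.univ.filter (fun x => m + 1 ≤ G.dist o x)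
          ⊆ Finset.univ.filter (fun x => m ≤ G.dist o x) := by
        intro x hx
        rw [Finset.mem_union] at hx
        rw [Finset.mem_filter]
        rcases hx with hx | hx
        · exact ⟨Finset.mem_univ x, le_of_eq (hF x hx).1.symm⟩
        · rw [Finset.mem_filter] at hx
          exact ⟨Finset.mem_univ x, by omega⟩
      have hdisj2 : Disjoint F (Finset.univ.filter (fun x => m + 1 ≤ G.dist o x)) := by
        rw [Finset.disjoint_left]
        intro x hx hx2
        rw [Finset.mem_filter] at hx2
        have := (hF x hx).1
        omega
      have hcards := Finset.card_le_card hsub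
      rw [Finset.card_union_of_disjoint hdisj2] at hcards
      rw [hsum, hsum2]
      omega
  -- main argument
  intro t ht
  set S : V → Finset V := fun i => Finset.univ.filter
      (fun j => (c (t - 1) j = i ∧ dh (t - 1) j = dh t i + 1) ∧
        t ≤ G.dist z j ∧ t ≤ G.dist o j) with hS
  have hdisj : (↑(Finset.univ.filter (fun i => G.dist z i < t)) : Set V).PairwiseDisjoint S := by
    intro i1 _ i2 _ hne'
    rw [Function.onFun, Finset.disjoint_left]
    intro x hx1 hx2
    rw [hS, Finset.mem_filter] at hx1 hx2
    exact hne' (hx1.2.1.1 ▸ hx2.2.1.1)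
  rw [(Finset.sum_biUnion hdisj).symm]
  have hprop : ∀ j ∈ (Finset.univ.filter (fun i => G.dist z i < t)).biUnion S,
      G.dist o j = t ∧ t - 1 ≤ G.dist z j ∧ t - 1 < t := by
    intro j hj
    rw [Finset.mem_biUnion] at hj
    obtain ⟨i, hiT, hj⟩ := hj
    rw [Finset.mem_filter] at hiT
    rw [hS, Finset.mem_filter] at hj
    obtain ⟨-, ⟨hc1, hc2⟩, hzj, hoj⟩ := hj
    have hit := hiT.2
    have hadj : G.Adj j i := by
      rcases Nat.lt_or_ge t 2 with ht2 | ht2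
      · have ht1 : t - 1 = 0 := by omega
        have hjo : j ≠ o := by
          intro he; subst he; rw [SimpleGraph.dist_self] at hoj; omega
        have := (hc0 j hjo).1
        rw [ht1] at hc1
        rwa [hc1] at this
      · have hjz : j ≠ z := by
          intro he; subst he; rw [SimpleGraph.dist_self] at hzj; omega
        have := (hc (t - 1) (by omega) j hjz).1
        rwa [hc1] at this
    have t1 := htri z j i hadj
    have hdzi : G.dist z i = t - 1 := by omega
    have hdzj : G.dist z j = t := by omega
    have hAt : dh t i = G.dist z i := hA t i (by omega)
    have hEj : dh (t - 1) j = G.dist o j := hE (t - 1) j (by omega) (by omega)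
    refine ⟨by omega, by omega, by omega⟩
  calc ∑ j ∈ (Finset.univ.filter (fun i => G.dist z i < t)).biUnion S, a (t - 1) j
      ≤ (Finset.univ.filter (fun x => t ≤ G.dist o x)).card :=
        hP (Fintype.card V) t (t - 1) _ (by omega) hprop
    _ ≤ Fintype.card V := by
        have := Finset.card_filter_le Finset.univ (fun x => t ≤ G.dist o x)
        simpa [Finset.card_univ] using this
end

section
/- If i ∈ I_0(t) has a neighbor j ∈ I_2(t), then d(0,i) = t-1, and consequently d̂_i(t) = t-1; any such j admitted as a child of i under monotonic filtering satisfies d̂_j(t) = t. -/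
section Aux

variable {V : Type*} [Fintype V] [DecidableEq V]
    {G : SimpleGraph V} [DecidableRel G.Adj] (hconn : G.Connected) (z o : V)
    (hne : ∀ i : V, (G.neighborFinset i).Nonempty)
    (dh : ℕ → V → ℕ)
    (hinit : ∀ i, dh 0 i = G.dist o i)
    (hsrc : ∀ t, 1 ≤ t → dh t z = 0)
    (hupd : ∀ t, 1 ≤ t → ∀ i, i ≠ z →
      dh t i = 1 + (G.neighborFinset i).inf' (hne i) (fun j => dh (t - 1) j))

include hconn hne hinit hsrc hupd

/-- Lower bound: the estimate is at least the min of the two true distances. -/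
lemma abf_lower : ∀ s k, min (G.dist z k) (G.dist o k) ≤ dh s k := by
  intro s
  induction s with
  | zero =>
    intro k; rw [hinit k]; exact min_le_right _ _
  | succ s ih =>
    intro k
    by_cases hk : k = z
    · subst hk
      simp [hconn.dist_eq_zero_iff.mpr rfl]
    · rw [hupd (s+1) (Nat.le_add_left 1 s) k hk]
      simp only [Nat.add_sub_cancel]
      obtain ⟨m, hm, hinf⟩ := Finset.exists_mem_eq_inf' (hne k) (fun j => dh s j)
      rw [hinf]
      rw [SimpleGraph.mem_neighborFinset] at hm
      have hmk : G.dist m k = 1 := SimpleGraph.dist_eq_one_iff_adj.mpr hm.symm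
      have h1 : G.dist z k ≤ G.dist z m + G.dist m k := hconn.dist_triangle
      have h2 : G.dist o k ≤ G.dist o m + G.dist m k := hconn.dist_triangle
      have := ih m
      omega

/-- Upper bound for converged nodes: if `d(z,k) < s` then `dh s k ≤ d(z,k)`. -/
lemma abf_upper_near : ∀ s, ∀ k, G.dist z k < s → dh s k ≤ G.dist z k := by
  intro s
  induction s with
  | zero => omega
  | succ s ih =>
    intro k hk
    by_cases hkz : k = z
    · subst hkz
      rw [hsrc (s+1) (Nat.le_add_left 1 s), hconn.dist_eq_zero_iff.mpr rfl]
    · have hd0 : G.dist z k ≠ 0 := fun h => hkz (hconn.dist_eq_zero_iff.mp h).symm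
      obtain ⟨p, hp⟩ := hconn.exists_walk_length_eq_dist k z
      have hpz : G.dist k z = G.dist z k := SimpleGraph.dist_comm ..
      cases p with
      | nil => rw [SimpleGraph.Walk.length_nil] at hp; omega
      | cons hadj q =>
        rename_i m
        rw [SimpleGraph.Walk.length_cons] at hp
        have hm : G.dist z m ≤ q.length := by
          rw [SimpleGraph.dist_comm]; exact SimpleGraph.dist_le q
        have hihm : dh s m ≤ G.dist z m := ih m (by omega)
        rw [hupd (s+1) (Nat.le_add_left 1 s) k hkz]
        simp only [Nat.add_sub_cancel]
        have hmem : m ∈ G.neighborFinset k := (SimpleGraph.mem_neighborFinset ..).mpr hadj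
        have := Finset.inf'_le (fun j => dh s j) hmem
        omega

/-- Upper bound via a walk to `o` of length exactly `s`. -/
lemma abf_upper_walk : ∀ s, ∀ k, ∀ w : G.Walk k o, w.length = s → dh s k ≤ s := by
  intro s
  induction s with
  | zero =>
    intro k w hw
    have : k = o := (SimpleGraph.Walk.eq_of_length_eq_zero hw)
    subst this
    rw [hinit, hconn.dist_eq_zero_iff.mpr rfl]
  | succ s ih =>
    intro k w hw
    by_cases hkz : k = z
    · subst hkz; rw [hsrc (s+1) (Nat.le_add_left 1 s)]; omega
    · cases w with
      | nil => simp at hw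
      | cons hadj q =>
        rename_i m
        rw [SimpleGraph.Walk.length_cons] at hw
        have hihm : dh s m ≤ s := ih m q (by omega)
        rw [hupd (s+1) (Nat.le_add_left 1 s) k hkz]
        simp only [Nat.add_sub_cancel]
        have hmem : m ∈ G.neighborFinset k := (SimpleGraph.mem_neighborFinset ..).mpr hadj
        have := Finset.inf'_le (fun j => dh s j) hmem
        omega

/-- Exact structure of the estimate for far nodes: if `s ≤ d(z,k)` then
`dh s k = s + d(o,m)` for some `m` reachable from `k` by a walk of length `s`. -/
lemma abf_far_exact : ∀ s, ∀ k, s ≤ G.dist z k →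
    ∃ m, (∃ w : G.Walk k m, w.length = s) ∧ dh s k = s + G.dist o m := by
  intro s
  induction s with
  | zero =>
    intro k _
    exact ⟨k, ⟨SimpleGraph.Walk.nil, rfl⟩, by rw [hinit]; omega⟩
  | succ s ih =>
    intro k hk
    have hkz : k ≠ z := by
      intro h; subst h
      rw [hconn.dist_eq_zero_iff.mpr rfl] at hk; omega
    rw [hupd (s+1) (Nat.le_add_left 1 s) k hkz]
    simp only [Nat.add_sub_cancel]
    obtain ⟨m₀, hm₀, hinf⟩ := Finset.exists_mem_eq_inf' (hne k) (fun j => dh s j)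
    rw [SimpleGraph.mem_neighborFinset] at hm₀
    have hdm : s ≤ G.dist z m₀ := by
      have h1 : G.dist m₀ k = 1 := SimpleGraph.dist_eq_one_iff_adj.mpr hm₀.symm
      have h2 : G.dist z k ≤ G.dist z m₀ + G.dist m₀ k := hconn.dist_triangle
      omega
    obtain ⟨m, ⟨w, hwlen⟩, hval⟩ := ih m₀ hdm
    refine ⟨m, ⟨SimpleGraph.Walk.cons hm₀ w, by rw [SimpleGraph.Walk.length_cons, hwlen]⟩, ?_⟩
    rw [hinf]
    omega

end Aux

/-- Post-source-switch setting with `d(z,o) ≥ 3`: if `i ∈ I_0(t)` has a neighbor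
`j ∈ I_2(t)`, then `d(z,i) = t-1` and consequently `d̂_i(t) = t-1`; any such `j`
admitted as a child of `i` under monotonic filtering (i.e. with
`d̂_j(t-1) = d̂_i(t) + 1`) satisfies `d̂_j(t) = t`. -/
theorem monotonic_filtering_boundary {V : Type*} [Fintype V] [DecidableEq V]
    (G : SimpleGraph V) [DecidableRel G.Adj] (hconn : G.Connected) (z o : V)
    (hzo : 3 ≤ G.dist z o)
    (hne : ∀ i : V, (G.neighborFinset i).Nonempty)
    (dh : ℕ → V → ℕ)
    (hinit : ∀ i, dh 0 i = G.dist o i)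
    (hsrc : ∀ t, 1 ≤ t → dh t z = 0)
    (hupd : ∀ t, 1 ≤ t → ∀ i, i ≠ z →
      dh t i = 1 + (G.neighborFinset i).inf' (hne i) (fun j => dh (t - 1) j)) :
    ∀ t, 1 ≤ t → ∀ i j, G.dist z i < t → t ≤ G.dist z j → t ≤ G.dist o j →
      G.Adj i j →
      G.dist z i = t - 1 ∧ dh t i = t - 1 ∧
      (dh (t - 1) j = dh t i + 1 → dh t j = t) := by
  intro t ht i j hi hzj hoj hadj
  have hij : G.dist i j = 1 := SimpleGraph.dist_eq_one_iff_adj.mpr hadj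
  have hji : G.dist j i = 1 := SimpleGraph.dist_eq_one_iff_adj.mpr hadj.symm
  have htri1 : G.dist z j ≤ G.dist z i + G.dist i j := hconn.dist_triangle
  have htri2 : G.dist o i ≤ G.dist o j + G.dist j i := hconn.dist_triangle
  have htri3 : G.dist o j ≤ G.dist o i + G.dist i j := hconn.dist_triangle
  have hzi : G.dist z i = t - 1 := by omega
  have hoi : t - 1 ≤ G.dist o i := by omega
  have hup : dh t i ≤ t - 1 := by
    have := abf_upper_near hconn z o hne dh hinit hsrc hupd t i (by omega)
    omega
  have hlo : t - 1 ≤ dh t i := by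
    have := abf_lower hconn z o hne dh hinit hsrc hupd t i
    omega
  have hti : dh t i = t - 1 := le_antisymm hup hlo
  refine ⟨hzi, hti, ?_⟩
  intro hmf
  rw [hti] at hmf
  have hmf' : dh (t - 1) j = t := by omega
  -- structure at time t-1 gives a walk of length t-1 from j to some m with d(o,m)=1
  obtain ⟨m, ⟨w, hwlen⟩, hval⟩ :=
    abf_far_exact hconn z o hne dh hinit hsrc hupd (t - 1) j (by omega)
  have hom : G.dist o m = 1 := by omega
  have hadjmo : G.Adj m o := SimpleGraph.dist_eq_one_iff_adj.mp
    (by rw [SimpleGraph.dist_comm]; exact hom)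
  -- extend to a walk of length t from j to o
  have hwalk : ∃ w' : G.Walk j o, w'.length = t := by
    refine ⟨w.concat hadjmo, ?_⟩
    rw [SimpleGraph.Walk.length_concat]; omega
  obtain ⟨w', hw'⟩ := hwalk
  have hub : dh t j ≤ t := abf_upper_walk hconn z o hne dh hinit hsrc hupd t j w' hw'
  obtain ⟨m', _, hval'⟩ :=
    abf_far_exact hconn z o hne dh hinit hsrc hupd t j hzj
  omega
end

section
/- Under monotonic filtering after the source switch, for every time t and every distance level x < t, the sum of accumulates over nodes at distance x from the new source 0 satisfies: sum over i ∈ F_0(x) of a_i(t) ≤ N + sum over y from x to D-1 of |F_0(y)|, where F_0(y) = {i : d(0,i) = y} and N = |V|. -/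
open Finset

/-- Helper: if two finsets are disjoint and their union is contained in a third,
the sum of their cards is at most the card of the third. -/
private lemma card_add_card_le {V : Type*} [DecidableEq V] {s t u : Finset V}
    (hdis : Disjoint s t) (hsub : s ∪ t ⊆ u) : s.card + t.card ≤ u.card := by
  rw [← Finset.card_union_of_disjoint hdis]
  exact Finset.card_le_card hsub

/-- Helper: one-step expansion of a level sum of accumulates. -/
private lemma sum_level_expand {V : Type*} [Fintype V] [DecidableEq V]
    (dc dp : V → ℕ) (cp : V → V) (ac ap : V → ℕ) (m : ℕ)
    (h : ∀ i, ac i = 1 +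
      ∑ j ∈ Finset.univ.filter (fun j => cp j = i ∧ dp j = dc i + 1), ap j) :
    ∑ i ∈ Finset.univ.filter (fun i => dc i = m), ac i
      ≤ (Finset.univ.filter (fun i => dc i = m)).card
        + ∑ j ∈ Finset.univ.filter (fun j => dp j = m + 1), ap j := by
  classical
  have hstep : ∀ i ∈ Finset.univ.filter (fun i => dc i = m),
      ac i = 1 + ∑ j ∈ Finset.univ.filter (fun j => cp j = i ∧ dp j = m + 1), ap j := by
    intro i hi
    have hdc : dc i = m := (Finset.mem_filter.mp hi).2
    rw [h i, hdc]
  rw [Finset.sum_congr rfl hstep, Finset.sum_add_distrib, Finset.sum_const, smul_eq_mul, mul_one]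
  apply Nat.add_le_add_left
  have hdisj : (↑(Finset.univ.filter (fun i => dc i = m)) : Set V).PairwiseDisjoint
      (fun i => Finset.univ.filter (fun j => cp j = i ∧ dp j = m + 1)) := by
    intro i _ i' _ hne
    refine Finset.disjoint_left.mpr ?_
    intro j hj hj'
    simp only [Finset.mem_filter, Finset.mem_univ, true_and] at hj hj'
    exact hne (by rw [← hj.1, hj'.1])
  rw [← Finset.sum_biUnion hdisj]
  apply Finset.sum_le_sum_of_subset
  intro j hj
  simp only [Finset.mem_biUnion, Finset.mem_filter, Finset.mem_univ, true_and] at hj ⊢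
  obtain ⟨i, _, _, hdp⟩ := hj
  exact hdp

/-- Monotonic filtering after a source switch from `o` (= node `D-1`) to `z`
(= node `0`), with effective diameter `D` (every node is within distance `D-1`
of `z` and `d(z,o) = D-1 ≥ 3`), initialized at the steady state for source `o`:
for every time `t` and distance level `x < t`,
`Σ_{i ∈ F_0(x)} a_i(t) ≤ N + Σ_{y=x}^{D-1} |F_0(y)|`
where `F_0(y) = {i : d(z,i) = y}` and `N = |V|`. -/
theorem monotonic_filtering_level_bound {V : Type*} [Fintype V] [DecidableEq V]
    (G : SimpleGraph V) [DecidableRel G.Adj] (hconn : G.Connected) (z o : V)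
    (D : ℕ) (hzo : 3 ≤ G.dist z o) (hDo : G.dist z o = D - 1)
    (hD : ∀ i, G.dist z i < D)
    (hne : ∀ i : V, (G.neighborFinset i).Nonempty)
    (dh : ℕ → V → ℕ) (c : ℕ → V → V) (a : ℕ → V → ℕ)
    (hinit : ∀ i, dh 0 i = G.dist o i)
    (hsrc : ∀ t, 1 ≤ t → dh t z = 0)
    (hupd : ∀ t, 1 ≤ t → ∀ i, i ≠ z →
      dh t i = 1 + (G.neighborFinset i).inf' (hne i) (fun j => dh (t - 1) j))
    (hc0s : c 0 o = o)
    (hc0 : ∀ i, i ≠ o → G.Adj i (c 0 i) ∧ dh 0 i = 1 + dh 0 (c 0 i))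
    (hcs : ∀ t, 1 ≤ t → c t z = z)
    (hc : ∀ t, 1 ≤ t → ∀ i, i ≠ z →
      G.Adj i (c t i) ∧ dh t i = 1 + dh (t - 1) (c t i))
    (ha : ∀ t i, a t i = 1 +
      ∑ j ∈ Finset.univ.filter
          (fun j => c (t - 1) j = i ∧ dh (t - 1) j = dh t i + 1), a (t - 1) j)
    (hlevel : ∀ m : ℕ,
      ∑ j ∈ Finset.univ.filter (fun j => G.dist o j = m), a 0 j ≤ Fintype.card V) :
    ∀ t x, x < t →
      ∑ i ∈ Finset.univ.filter (fun i => G.dist z i = x), a t i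
        ≤ Fintype.card V +
          ∑ y ∈ Finset.Icc x (D - 1),
            (Finset.univ.filter (fun i => G.dist z i = y)).card := by
  classical
  -- basic graph facts
  have hadjd : ∀ (r u v : V), G.Adj u v → G.dist r u ≤ G.dist r v + 1 := by
    intro r u v huv
    have h1 : G.dist v u = 1 := SimpleGraph.dist_eq_one_iff_adj.mpr huv.symm
    calc G.dist r u ≤ G.dist r v + G.dist v u := hconn.dist_triangle
      _ = G.dist r v + 1 := by rw [h1]
  have hpred : ∀ (r i : V), i ≠ r → ∃ j, G.Adj i j ∧ G.dist r j + 1 = G.dist r i := by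
    intro r i hir
    obtain ⟨p, hp⟩ := (hconn.preconnected i r).exists_walk_length_eq_dist
    cases p with
    | nil => exact absurd rfl hir
    | @cons _ b _ hadj q =>
      refine ⟨b, hadj, ?_⟩
      have h1 : G.dist r b ≤ q.length := by
        rw [SimpleGraph.dist_comm]; exact SimpleGraph.dist_le q
      have h2 : G.dist r i ≤ G.dist r b + 1 := hadjd r i b hadj
      have h3 : q.length + 1 = G.dist i r := by
        simpa [SimpleGraph.Walk.length_cons] using hp
      have h4 : G.dist i r = G.dist r i := SimpleGraph.dist_comm
      omega
  -- lower bound on dh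
  have LB : ∀ t i, min (G.dist z i) t ≤ dh t i := by
    intro t
    induction t with
    | zero => intro i; simp
    | succ t IH =>
      intro i
      by_cases hi : i = z
      · subst hi; simp [SimpleGraph.dist_self]
      · rw [hupd (t+1) (by omega) i hi]
        obtain ⟨j0, hj0mem, hj0eq⟩ := Finset.exists_mem_eq_inf' (hne i)
          (fun j => dh ((t+1) - 1) j)
        rw [hj0eq]
        have hadj0 : G.Adj i j0 := by
          rwa [SimpleGraph.mem_neighborFinset] at hj0mem
        have h1 := IH j0
        have h2 : G.dist z i ≤ G.dist z j0 + 1 := hadjd z i j0 hadj0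
        simp only [Nat.add_sub_cancel]
        omega
  -- BFS correctness up to radius t-1
  have CORRECT : ∀ t i, G.dist z i + 1 ≤ t → dh t i = G.dist z i := by
    intro t
    induction t with
    | zero => intro i h; omega
    | succ t IH =>
      intro i h
      by_cases hi : i = z
      · subst hi; rw [hsrc (t+1) (by omega), SimpleGraph.dist_self]
      · obtain ⟨j, hadjij, hjd⟩ := hpred z i hi
        have hdpos : 0 < G.dist z i := hconn.pos_dist_of_ne (fun hh => hi hh.symm)
        have hjle : G.dist z j + 1 ≤ t := by omega
        have hdj := IH j hjle
        apply le_antisymm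
        · rw [hupd (t+1) (by omega) i hi]
          have hle : (G.neighborFinset i).inf' (hne i) (fun l => dh ((t+1) - 1) l)
              ≤ dh ((t+1) - 1) j :=
            Finset.inf'_le _ (by rw [SimpleGraph.mem_neighborFinset]; exact hadjij)
          simp only [Nat.add_sub_cancel] at hle ⊢
          omega
        · have := LB (t+1) i
          omega
  -- level sets of the true distance coincide with dh level sets for x < t
  have LEV : ∀ t x, x < t →
      Finset.univ.filter (fun i => G.dist z i = x)
        = Finset.univ.filter (fun i => dh t i = x) := by
    intro t x hxt
    ext i
    simp only [Finset.mem_filter, Finset.mem_univ, true_and]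
    constructor
    · intro h
      rw [CORRECT t i (by omega), h]
    · intro h
      rcases le_or_gt (G.dist z i + 1) t with hle | hlt
      · rw [CORRECT t i hle] at h; exact h
      · have := LB t i
        omega
  -- base monotonicity: dh 0 ≤ dh 1 away from z
  have MONBASE : ∀ j, j ≠ z → dh 0 j ≤ dh 1 j := by
    intro j hj
    by_cases hjo : j = o
    · rw [hinit j, hjo, SimpleGraph.dist_self]
      omega
    · have h1 := hupd 1 (by omega) j hj
      have hop : 0 < G.dist o j := hconn.pos_dist_of_ne (fun hh => hjo hh.symm)
      have h2 : G.dist o j - 1 ≤ (G.neighborFinset j).inf' (hne j)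
          (fun l => dh (1 - 1) l) := by
        apply Finset.le_inf'
        intro l hl
        have hadjl : G.Adj j l := by rwa [SimpleGraph.mem_neighborFinset] at hl
        have := hadjd o j l hadjl
        simp only [Nat.sub_self]
        rw [hinit l]
        omega
      rw [hinit j]
      omega
  -- key monotonicity lemma (Mon↑): old values cannot jump up backwards in time
  have MON : ∀ s j, ((s + 1 ≤ dh (s+1) j → dh s j ≤ dh (s+1) j + 1)
      ∧ (s + 2 ≤ dh (s+1) j → dh s j ≤ dh (s+1) j)) := by
    intro s
    induction s with
    | zero =>
      intro j
      simp only [Nat.zero_add]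
      constructor
      · intro h
        have hj : j ≠ z := by
          intro hh; rw [hh, hsrc 1 (by omega)] at h; omega
        have := MONBASE j hj
        omega
      · intro h
        have hj : j ≠ z := by
          intro hh; rw [hh, hsrc 1 (by omega)] at h; omega
        have := MONBASE j hj
        omega
    | succ s IH =>
      intro j
      by_cases hj : j = z
      · have h0 : dh (s+1+1) j = 0 := by rw [hj]; exact hsrc (s+1+1) (by omega)
        exact ⟨fun h => by omega, fun h => by omega⟩
      · have hcj := hc (s+1+1) (by omega) j hj
        obtain ⟨hadjp, heqp⟩ := hcj
        set p := c (s+1+1) j with hp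
        have heqp' : dh (s+1+1) j = 1 + dh (s+1) p := by
          simpa [Nat.add_sub_cancel] using heqp
        have hup : dh (s+1) j = 1 + (G.neighborFinset j).inf' (hne j)
            (fun l => dh ((s+1) - 1) l) := hupd (s+1) (by omega) j hj
        have hle : (G.neighborFinset j).inf' (hne j) (fun l => dh ((s+1) - 1) l)
            ≤ dh ((s+1) - 1) p :=
          Finset.inf'_le _ (by rw [SimpleGraph.mem_neighborFinset]; exact hadjp)
        simp only [Nat.add_sub_cancel] at hup hle
        obtain ⟨IH1, IH2⟩ := IH p
        constructor
        · intro h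
          have h1 : s + 1 ≤ dh (s+1) p := by omega
          have h2 := IH1 h1
          omega
        · intro h
          have h1 : s + 2 ≤ dh (s+1) p := by omega
          have h2 := IH2 h1
          omega
  -- one-step expansion of level sums
  have EXPAND : ∀ t m,
      ∑ i ∈ Finset.univ.filter (fun i => dh t i = m), a t i
        ≤ (Finset.univ.filter (fun i => dh t i = m)).card
          + ∑ j ∈ Finset.univ.filter (fun j => dh (t-1) j = m + 1), a (t-1) j :=
    fun t m => sum_level_expand (dh t) (dh (t-1)) (c (t-1)) (a t) (a (t-1)) m (ha t)
  -- steady state: level sums at time 0 are bounded by the upper tail count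
  have STEADY : ∀ r m, (∀ j, dh 0 j < m + r) →
      ∑ i ∈ Finset.univ.filter (fun i => dh 0 i = m), a 0 i
        ≤ (Finset.univ.filter (fun j => m ≤ dh 0 j)).card := by
    intro r
    induction r with
    | zero =>
      intro m hm
      have hempty : Finset.univ.filter (fun i => dh 0 i = m) = ∅ := by
        ext j
        simp only [Finset.mem_filter, Finset.mem_univ, true_and, Finset.notMem_empty,
          iff_false]
        have := hm j
        omega
      rw [hempty]
      simp
    | succ r IH =>
      intro m hm
      have h1 := EXPAND 0 m
      simp only [Nat.zero_sub] at h1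
      have h2 := IH (m+1) (by intro j; have := hm j; omega)
      have h3 : (Finset.univ.filter (fun i => dh 0 i = m)).card
          + (Finset.univ.filter (fun j => m + 1 ≤ dh 0 j)).card
          ≤ (Finset.univ.filter (fun j => m ≤ dh 0 j)).card := by
        apply card_add_card_le
        · refine Finset.disjoint_left.mpr ?_
          intro j hj hj'
          simp only [Finset.mem_filter, Finset.mem_univ, true_and] at hj hj'
          omega
        · intro j hj
          simp only [Finset.mem_union, Finset.mem_filter, Finset.mem_univ, true_and] at hj ⊢
          omega
      omega
  -- the main invariant R2 for the old region
  have R2 : ∀ t m, t + 1 ≤ m →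
      ∑ i ∈ Finset.univ.filter (fun i => dh t i = m), a t i
        ≤ (Finset.univ.filter (fun j => m ≤ dh t j ∨ G.dist z j + 1 ≤ t)).card := by
    intro t
    induction t with
    | zero =>
      intro m _
      have hfe : Finset.univ.filter (fun j => m ≤ dh 0 j ∨ G.dist z j + 1 ≤ 0)
          = Finset.univ.filter (fun j => m ≤ dh 0 j) := by
        apply Finset.filter_congr
        intro j _
        omega
      rw [hfe]
      exact STEADY (Finset.univ.sup (dh 0) + 1) m
        (fun j => by have := Finset.le_sup (f := dh 0) (Finset.mem_univ j); omega)
    | succ t IH =>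
      intro m hm
      have h1 := EXPAND (t+1) m
      simp only [Nat.add_sub_cancel] at h1
      have h2 := IH (m+1) (by omega)
      have h3 : (Finset.univ.filter (fun j => m + 1 ≤ dh t j ∨ G.dist z j + 1 ≤ t)).card
          ≤ (Finset.univ.filter
              (fun j => m + 1 ≤ dh (t+1) j ∨ G.dist z j + 1 ≤ t + 1)).card := by
        apply Finset.card_le_card
        intro j hj
        simp only [Finset.mem_filter, Finset.mem_univ, true_and] at hj ⊢
        rcases hj with hj | hj
        · by_cases hdz : G.dist z j + 1 ≤ t + 1
          · right; exact hdz
          · left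
            have hlb := LB (t+1) j
            have hlb' : t + 1 ≤ dh (t+1) j := by omega
            obtain ⟨mon1, mon2⟩ := MON t j
            by_cases hcase : t + 2 ≤ dh (t+1) j
            · have := mon2 hcase
              omega
            · have := mon1 hlb'
              omega
        · right; omega
      have h4 : (Finset.univ.filter (fun i => dh (t+1) i = m)).card
          + (Finset.univ.filter
              (fun j => m + 1 ≤ dh (t+1) j ∨ G.dist z j + 1 ≤ t + 1)).card
          ≤ (Finset.univ.filter
              (fun j => m ≤ dh (t+1) j ∨ G.dist z j + 1 ≤ t + 1)).card := by
        apply card_add_card_le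
        · refine Finset.disjoint_left.mpr ?_
          intro j hj hj'
          simp only [Finset.mem_filter, Finset.mem_univ, true_and] at hj hj'
          rcases hj' with hj' | hj'
          · omega
          · have := CORRECT (t+1) j (by omega)
            omega
        · intro j hj
          simp only [Finset.mem_union, Finset.mem_filter, Finset.mem_univ, true_and] at hj ⊢
          rcases hj with hj | hj
          · left; omega
          · rcases hj with hj | hj
            · left; omega
            · right; exact hj
      omega
  -- old region bounded by N
  have R2N : ∀ t m, t + 1 ≤ m →
      ∑ i ∈ Finset.univ.filter (fun i => dh t i = m), a t i ≤ Fintype.card V := by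
    intro t m hm
    refine le_trans (R2 t m hm) ?_
    refine le_trans (Finset.card_filter_le _ _) ?_
    rw [Finset.card_univ]
  -- diagonal bound
  have DIAG : ∀ s, 1 ≤ s →
      ∑ i ∈ Finset.univ.filter (fun i => dh s i = s), a s i
        ≤ (Finset.univ.filter (fun j => s ≤ G.dist z j)).card + Fintype.card V := by
    intro s hs
    have h1 := EXPAND s s
    have h2 := R2N (s-1) (s+1) (by omega)
    have h3 : (Finset.univ.filter (fun i => dh s i = s)).card
        ≤ (Finset.univ.filter (fun j => s ≤ G.dist z j)).card := by
      apply Finset.card_le_card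
      intro j hj
      simp only [Finset.mem_filter, Finset.mem_univ, true_and] at hj ⊢
      rcases le_or_gt s (G.dist z j) with h | h
      · exact h
      · have := CORRECT s j (by omega)
        omega
    omega
  -- tail count is bounded by the Icc sum of level cards
  have CARDGE : ∀ k,
      (Finset.univ.filter (fun j => k ≤ G.dist z j)).card
        ≤ ∑ y ∈ Finset.Icc k (D-1),
            (Finset.univ.filter (fun i => G.dist z i = y)).card := by
    intro k
    refine le_trans (Finset.card_le_card (?_ :
        Finset.univ.filter (fun j => k ≤ G.dist z j)
          ⊆ (Finset.Icc k (D-1)).biUnion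
              (fun y => Finset.univ.filter (fun i => G.dist z i = y))))
      Finset.card_biUnion_le
    intro j hj
    simp only [Finset.mem_filter, Finset.mem_univ, true_and] at hj
    simp only [Finset.mem_biUnion, Finset.mem_Icc, Finset.mem_filter, Finset.mem_univ,
      true_and]
    exact ⟨G.dist z j, ⟨hj, by have := hD j; omega⟩, rfl⟩
  -- Main claim, by induction on t
  intro t
  induction t with
  | zero => intro x hx; omega
  | succ t IH =>
    intro x hxt
    by_cases hxD : x ≤ D - 1
    · -- split the Icc sum
      have hicc : Finset.Icc x (D-1) = insert x (Finset.Icc (x+1) (D-1)) := by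
        ext y
        simp only [Finset.mem_Icc, Finset.mem_insert]
        omega
      have hnotmem : x ∉ Finset.Icc (x+1) (D-1) := by
        simp only [Finset.mem_Icc]
        omega
      have hsplit : ∑ y ∈ Finset.Icc x (D-1),
            (Finset.univ.filter (fun i => G.dist z i = y)).card
          = (Finset.univ.filter (fun i => G.dist z i = x)).card
            + ∑ y ∈ Finset.Icc (x+1) (D-1),
                (Finset.univ.filter (fun i => G.dist z i = y)).card := by
        rw [hicc, Finset.sum_insert hnotmem]
      have hlev := LEV (t+1) x hxt
      rw [hlev]
      have h1 := EXPAND (t+1) x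
      simp only [Nat.add_sub_cancel] at h1
      have hcard : (Finset.univ.filter (fun i => dh (t+1) i = x)).card
          = (Finset.univ.filter (fun i => G.dist z i = x)).card := by rw [hlev]
      -- bound the children sum B
      have hB : ∑ j ∈ Finset.univ.filter (fun j => dh t j = x + 1), a t j
          ≤ Fintype.card V
            + ∑ y ∈ Finset.Icc (x+1) (D-1),
                (Finset.univ.filter (fun i => G.dist z i = y)).card := by
        rcases Nat.lt_or_ge (x+1) t with hcase | hcase
        · -- x + 1 < t : still in the corrected region, use IH
          have hlev' := LEV t (x+1) hcase
          rw [← hlev']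
          exact IH (x+1) hcase
        · rcases Nat.eq_or_lt_of_le hcase with hcase' | hcase'
          · -- x + 1 = t : diagonal
            subst hcase'
            have hd := DIAG (x+1) (by omega)
            have hcge := CARDGE (x+1)
            omega
          · -- x + 1 > t, i.e. x = t : superdiagonal, old region
            have hx1 : t + 1 ≤ x + 1 := by omega
            have := R2N t (x+1) hx1
            omega
      omega
    · -- x > D - 1 : the level set is empty
      have hempty : Finset.univ.filter (fun i => G.dist z i = x) = ∅ := by
        ext i
        simp only [Finset.mem_filter, Finset.mem_univ, true_and, Finset.notMem_empty,
          iff_false]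
        have := hD i
        have h4 : 4 ≤ D := by omega
        omega
      rw [hempty]
      simp
end

section
/- Under monotonic filtering after a source switch in an arbitrary connected graph of N nodes with all values equal to 1, every partial accumulate is bounded by 2N at all times: a_i(t) ≤ 2N for i ∈ I_0(t), a_i(t) = 1 for i ∈ I_1(t), and a_i(t) ≤ N for i ∈ I_2(t). -/
/-- Main theorem: under monotonic filtering after a source switch from `o` to
`z` (`d(z,o) ≥ 3`) in an arbitrary connected graph of `N` nodes with all values
equal to 1, every partial accumulate is bounded at all times `t ≥ 1`:
`a_i(t) ≤ 2N` for `i ∈ I_0(t)`, `a_i(t) = 1` for `i ∈ I_1(t)`, and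
`a_i(t) ≤ N` for `i ∈ I_2(t)`. -/
theorem monotonic_filtering_main {V : Type*} [Fintype V] [DecidableEq V]
    (G : SimpleGraph V) [DecidableRel G.Adj] (hconn : G.Connected) (z o : V)
    (hzo : 3 ≤ G.dist z o)
    (hne : ∀ i : V, (G.neighborFinset i).Nonempty)
    (dh : ℕ → V → ℕ) (c : ℕ → V → V) (a : ℕ → V → ℕ)
    (hinit : ∀ i, dh 0 i = G.dist o i)
    (hsrc : ∀ t, 1 ≤ t → dh t z = 0)
    (hupd : ∀ t, 1 ≤ t → ∀ i, i ≠ z →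
      dh t i = 1 + (G.neighborFinset i).inf' (hne i) (fun j => dh (t - 1) j))
    (hc0s : c 0 o = o)
    (hc0 : ∀ i, i ≠ o → G.Adj i (c 0 i) ∧ dh 0 i = 1 + dh 0 (c 0 i))
    (hcs : ∀ t, 1 ≤ t → c t z = z)
    (hc : ∀ t, 1 ≤ t → ∀ i, i ≠ z →
      G.Adj i (c t i) ∧ dh t i = 1 + dh (t - 1) (c t i))
    (ha : ∀ t i, a t i = 1 +
      ∑ j ∈ Finset.univ.filter
          (fun j => c (t - 1) j = i ∧ dh (t - 1) j = dh t i + 1), a (t - 1) j)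
    (hlevel : ∀ m : ℕ,
      ∑ j ∈ Finset.univ.filter (fun j => G.dist o j = m), a 0 j ≤ Fintype.card V) :
    ∀ t, 1 ≤ t → ∀ i,
      (G.dist z i < t → a t i ≤ 2 * Fintype.card V) ∧
      (G.dist o i < t → t ≤ G.dist z i → a t i = 1) ∧
      (t ≤ G.dist z i → t ≤ G.dist o i → a t i ≤ Fintype.card V) := by
  classical
  -- basic distance facts
  have adj_dist : ∀ x i j : V, G.Adj i j → G.dist x i ≤ G.dist x j + 1 := by
    intro x i j hadj
    have ht := hconn.dist_triangle (u := x) (v := j) (w := i)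
    have h1 : G.dist j i = 1 := SimpleGraph.dist_eq_one_iff_adj.mpr hadj.symm
    omega
  have ne_of_dist : ∀ x i : V, 1 ≤ G.dist x i → i ≠ x := by
    intro x i h hx
    rw [hx, SimpleGraph.dist_self] at h; omega
  have pos_of_ne : ∀ x i : V, i ≠ x → 1 ≤ G.dist x i := by
    intro x i h
    rcases Nat.eq_zero_or_pos (G.dist x i) with h0 | h0
    · exact absurd ((hconn.dist_eq_zero_iff).mp h0) (fun hh => h hh.symm)
    · omega
  have exists_closer : ∀ x i : V, 1 ≤ G.dist x i →
      ∃ j, G.Adj i j ∧ G.dist x j + 1 = G.dist x i := by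
    intro x i h
    obtain ⟨p, hp⟩ := hconn.exists_walk_length_eq_dist x i
    have hp' : p.reverse.length = G.dist x i := by
      rw [SimpleGraph.Walk.length_reverse, hp]
    cases hrev : p.reverse with
    | nil => rw [hrev] at hp'; simp only [SimpleGraph.Walk.length_nil] at hp'; omega
    | cons hadj q =>
      rename_i j
      refine ⟨j, hadj, ?_⟩
      have h1 : G.dist x j ≤ q.length := by
        have := SimpleGraph.dist_le q.reverse
        simpa [SimpleGraph.Walk.length_reverse] using this
      have h2 : q.length + 1 = G.dist x i := by
        rw [hrev] at hp'; simpa using hp'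
      have h3 := adj_dist x i j hadj
      omega
  -- lower bound: wave from z
  have lb : ∀ t i, min (G.dist z i) t ≤ dh t i := by
    intro t
    induction t with
    | zero => intro i; simp
    | succ t ih =>
      intro i
      by_cases hiz : i = z
      · subst hiz; simp [SimpleGraph.dist_self]
      · rw [hupd (t+1) (by omega) i hiz, Nat.add_sub_cancel]
        obtain ⟨j0, hj0m, hj0⟩ := Finset.exists_mem_eq_inf' (hne i) (fun j => dh t j)
        rw [hj0]
        have hadj : G.Adj i j0 := (SimpleGraph.mem_neighborFinset _ _ _).mp hj0m
        have h1 := adj_dist z i j0 hadj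
        have h2 := ih j0
        omega
  -- upper bound inside the z-wave
  have ubz : ∀ t i, G.dist z i < t → dh t i ≤ G.dist z i := by
    intro t
    induction t with
    | zero => intro i h; omega
    | succ t ih =>
      intro i hi
      by_cases hiz : i = z
      · subst hiz; rw [hsrc (t+1) (by omega)]; omega
      · obtain ⟨j, hadj, hj⟩ := exists_closer z i (pos_of_ne z i hiz)
        rw [hupd (t+1) (by omega) i hiz, Nat.add_sub_cancel]
        have h2 : (G.neighborFinset i).inf' (hne i) (fun j => dh t j) ≤ dh t j :=
          Finset.inf'_le _ ((SimpleGraph.mem_neighborFinset _ _ _).mpr hadj)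
        have h3 := ih j (by omega)
        omega
  -- outside the z-wave: value at least the old distance
  have lo : ∀ t i, t ≤ G.dist z i → G.dist o i ≤ dh t i := by
    intro t
    induction t with
    | zero => intro i _; exact le_of_eq (hinit i).symm
    | succ t ih =>
      intro i hzi
      have hiz : i ≠ z := ne_of_dist z i (by omega)
      rw [hupd (t+1) (by omega) i hiz, Nat.add_sub_cancel]
      obtain ⟨j0, hj0m, hj0⟩ := Finset.exists_mem_eq_inf' (hne i) (fun j => dh t j)
      rw [hj0]
      have hadj : G.Adj i j0 := (SimpleGraph.mem_neighborFinset _ _ _).mp hj0m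
      have h1 := adj_dist z i j0 hadj
      have h2 := adj_dist o i j0 hadj
      have h3 := ih j0 (by omega)
      omega
  -- global upper bound
  have ub : ∀ t i, dh t i ≤ max (G.dist o i) (t+1) := by
    intro t
    induction t with
    | zero => intro i; rw [hinit i]; exact le_max_left _ _
    | succ t ih =>
      intro i
      by_cases hiz : i = z
      · subst hiz; rw [hsrc (t+1) (by omega)]; omega
      · rw [hupd (t+1) (by omega) i hiz, Nat.add_sub_cancel]
        by_cases hio : i = o
        · obtain ⟨j0, hj0m⟩ := hne i
          have hadj : G.Adj i j0 := (SimpleGraph.mem_neighborFinset _ _ _).mp hj0m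
          have h2 : (G.neighborFinset i).inf' (hne i) (fun j => dh t j) ≤ dh t j0 :=
            Finset.inf'_le _ hj0m
          have h3 := ih j0
          have h4 : G.dist o j0 = 1 := SimpleGraph.dist_eq_one_iff_adj.mpr (hio ▸ hadj)
          omega
        · obtain ⟨j, hadj, hj⟩ := exists_closer o i (pos_of_ne o i hio)
          have h2 : (G.neighborFinset i).inf' (hne i) (fun j => dh t j) ≤ dh t j :=
            Finset.inf'_le _ ((SimpleGraph.mem_neighborFinset _ _ _).mpr hadj)
          have h3 := ih j
          omega
  -- exact value in I2
  have eqI2 : ∀ t i, t ≤ G.dist z i → t ≤ G.dist o i → dh t i = G.dist o i := by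
    intro t
    induction t with
    | zero => intro i _ _; exact hinit i
    | succ t ih =>
      intro i hzi hoi
      have hiz : i ≠ z := ne_of_dist z i (by omega)
      obtain ⟨j, hadj, hj⟩ := exists_closer o i (by omega)
      have hup : dh (t+1) i ≤ G.dist o i := by
        rw [hupd (t+1) (by omega) i hiz, Nat.add_sub_cancel]
        have h2 : (G.neighborFinset i).inf' (hne i) (fun j => dh t j) ≤ dh t j :=
          Finset.inf'_le _ ((SimpleGraph.mem_neighborFinset _ _ _).mpr hadj)
        have hdzj := adj_dist z i j hadj
        have h3 := ih j (by omega) (by omega)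
        omega
      have hlow := lo (t+1) i hzi
      omega
  -- children stay close (in the old metric)
  have childNear : ∀ (s : ℕ) (i j : V), i ≠ z → c s j = i →
      G.dist o j ≤ G.dist o i + 1 := by
    intro s i j hiz hcj
    cases s with
    | zero =>
      by_cases hjo : j = o
      · subst hjo
        rw [hc0s] at hcj
        subst hcj
        simp [SimpleGraph.dist_self]
      · have hadj := (hc0 j hjo).1
        rw [hcj] at hadj
        exact adj_dist o j i hadj
    | succ s =>
      by_cases hjz : j = z
      · subst hjz
        rw [hcs (s+1) (by omega)] at hcj
        exact absurd hcj.symm hiz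
      · have hadj := (hc (s+1) (by omega) j hjz).1
        rw [hcj] at hadj
        exact adj_dist o j i hadj
  -- I1 nodes have value exactly 1
  have oneI1 : ∀ t, 1 ≤ t → ∀ i, G.dist o i < t → t ≤ G.dist z i → a t i = 1 := by
    intro t ht i h1 h2
    rw [ha t i]
    have hempty : (Finset.univ.filter
        (fun j => c (t-1) j = i ∧ dh (t-1) j = dh t i + 1)) = ∅ := by
      rw [Finset.filter_eq_empty_iff]
      intro j _
      rintro ⟨hcj, hdhj⟩
      have hiz : i ≠ z := ne_of_dist z i (by omega)
      have hdti : t ≤ dh t i := by have := lb t i; omega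
      by_cases hzj : G.dist z j < t - 1
      · have hu := ubz (t-1) j hzj
        have hl := lb (t-1) j
        omega
      · have hoj := childNear (t-1) i j hiz hcj
        have hu := ub (t-1) j
        have ht1 : t - 1 + 1 = t := by omega
        rw [ht1] at hu
        omega
    rw [hempty, Finset.sum_empty]
    omega
  -- level sums at time 0
  have A_step : ∀ m : ℕ,
      (Finset.univ.filter (fun j => G.dist o j = m)).card
        + ∑ j ∈ Finset.univ.filter (fun j => G.dist o j = m+1), a 0 j
      ≤ ∑ j ∈ Finset.univ.filter (fun j => G.dist o j = m), a 0 j := by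
    intro m
    have hrw : ∀ i ∈ Finset.univ.filter (fun j => G.dist o j = m), a 0 i
        = 1 + ∑ j ∈ Finset.univ.filter (fun j => c 0 j = i ∧ dh 0 j = dh 0 i + 1), a 0 j := by
      intro i _
      simpa using ha 0 i
    rw [Finset.sum_congr rfl hrw, Finset.sum_add_distrib, Finset.sum_const, smul_eq_mul,
      mul_one]
    have hdisj : (↑(Finset.univ.filter (fun j => G.dist o j = m)) : Set V).PairwiseDisjoint
        (fun i => Finset.univ.filter (fun j => c 0 j = i ∧ dh 0 j = dh 0 i + 1)) := by
      intro x _ y _ hxy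
      rw [Function.onFun, Finset.disjoint_left]
      intro j hj1 hj2
      rw [Finset.mem_filter] at hj1 hj2
      exact hxy (hj1.2.1.symm.trans hj2.2.1)
    rw [← Finset.sum_biUnion hdisj]
    have hsub : Finset.univ.filter (fun j => G.dist o j = m+1)
        ⊆ (Finset.univ.filter (fun j => G.dist o j = m)).biUnion
          (fun i => Finset.univ.filter (fun j => c 0 j = i ∧ dh 0 j = dh 0 i + 1)) := by
      intro j hj
      rw [Finset.mem_filter] at hj
      have hjo : j ≠ o := by
        intro h; rw [h, SimpleGraph.dist_self] at hj; omega
      obtain ⟨hadj, hdh⟩ := hc0 j hjo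
      rw [Finset.mem_biUnion]
      refine ⟨c 0 j, ?_, ?_⟩
      · rw [Finset.mem_filter]
        refine ⟨Finset.mem_univ _, ?_⟩
        have h1 := hinit j
        have h2 := hinit (c 0 j)
        omega
      · rw [Finset.mem_filter]
        exact ⟨Finset.mem_univ _, rfl, by omega⟩
    have hle := Finset.sum_le_sum_of_subset (f := fun j => a 0 j) hsub
    beta_reduce at hle
    omega
  have Acard : ∀ m : ℕ,
      (Finset.univ.filter (fun j => G.dist o j < m)).card
        + ∑ j ∈ Finset.univ.filter (fun j => G.dist o j = m), a 0 j
      ≤ Fintype.card V := by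
    intro m
    induction m with
    | zero =>
      have h0 : (Finset.univ.filter (fun j : V => G.dist o j < 0)) = ∅ := by
        rw [Finset.filter_eq_empty_iff]; intro j _; omega
      rw [h0]
      simpa using hlevel 0
    | succ m ih =>
      have hu : Finset.univ.filter (fun j : V => G.dist o j < m+1)
          = Finset.univ.filter (fun j => G.dist o j < m)
            ∪ Finset.univ.filter (fun j => G.dist o j = m) := by
        ext j
        simp only [Finset.mem_filter, Finset.mem_union, Finset.mem_univ, true_and]
        omega
      have hd : Disjoint (Finset.univ.filter (fun j : V => G.dist o j < m))
          (Finset.univ.filter (fun j => G.dist o j = m)) := by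
        rw [Finset.disjoint_left]
        intro j h1 h2
        rw [Finset.mem_filter] at h1 h2
        omega
      have hcard : (Finset.univ.filter (fun j : V => G.dist o j < m+1)).card
          = (Finset.univ.filter (fun j : V => G.dist o j < m)).card
            + (Finset.univ.filter (fun j : V => G.dist o j = m)).card := by
        rw [hu, Finset.card_union_of_disjoint hd]
      have := A_step m
      omega
  -- I2 aggregate bound
  have F_bound : ∀ t m : ℕ,
      ∑ i ∈ Finset.univ.filter
        (fun i => t ≤ G.dist z i ∧ t ≤ G.dist o i ∧ G.dist o i = m), a t i
      ≤ ∑ j ∈ Finset.univ.filter (fun j => G.dist o j = m), a 0 j := by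
    intro t
    induction t with
    | zero =>
      intro m
      have hset : Finset.univ.filter
          (fun i : V => 0 ≤ G.dist z i ∧ 0 ≤ G.dist o i ∧ G.dist o i = m)
          = Finset.univ.filter (fun j => G.dist o j = m) := by
        ext i; simp
      rw [hset]
    | succ t ih =>
      intro m
      have hrw : ∀ i ∈ Finset.univ.filter
          (fun i => t+1 ≤ G.dist z i ∧ t+1 ≤ G.dist o i ∧ G.dist o i = m), a (t+1) i
          = 1 + ∑ j ∈ Finset.univ.filter
              (fun j => c t j = i ∧ dh t j = dh (t+1) i + 1), a t j := by
        intro i _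
        simpa using ha (t+1) i
      rw [Finset.sum_congr rfl hrw, Finset.sum_add_distrib, Finset.sum_const, smul_eq_mul,
        mul_one]
      have hdisj : (↑(Finset.univ.filter
          (fun i : V => t+1 ≤ G.dist z i ∧ t+1 ≤ G.dist o i ∧ G.dist o i = m)) : Set V).PairwiseDisjoint
          (fun i => Finset.univ.filter (fun j => c t j = i ∧ dh t j = dh (t+1) i + 1)) := by
        intro x _ y _ hxy
        rw [Function.onFun, Finset.disjoint_left]
        intro j hj1 hj2
        rw [Finset.mem_filter] at hj1 hj2
        exact hxy (hj1.2.1.symm.trans hj2.2.1)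
      rw [← Finset.sum_biUnion hdisj]
      have hsub : (Finset.univ.filter
            (fun i : V => t+1 ≤ G.dist z i ∧ t+1 ≤ G.dist o i ∧ G.dist o i = m)).biUnion
            (fun i => Finset.univ.filter (fun j => c t j = i ∧ dh t j = dh (t+1) i + 1))
          ⊆ Finset.univ.filter
            (fun j => t ≤ G.dist z j ∧ t ≤ G.dist o j ∧ G.dist o j = m+1) := by
        intro j hj
        rw [Finset.mem_biUnion] at hj
        obtain ⟨i, hiS, hjC⟩ := hj
        rw [Finset.mem_filter] at hiS
        obtain ⟨-, hzi, hoi, hmi⟩ := hiS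
        rw [Finset.mem_filter] at hjC
        obtain ⟨-, hcj, hdhj⟩ := hjC
        have hdt1 : dh (t+1) i = m := by rw [eqI2 (t+1) i hzi hoi, hmi]
        rw [hdt1] at hdhj
        have hzj : t ≤ G.dist z j := by
          by_contra hcon
          push_neg at hcon
          have hu := ubz t j hcon
          have hl := lb t j
          omega
        have hloj := lo t j hzj
        have hubj := ub t j
        rw [Finset.mem_filter]
        exact ⟨Finset.mem_univ _, hzj, by omega, by omega⟩
      have h1 := Finset.sum_le_sum_of_subset (f := fun j => a t j) hsub
      beta_reduce at h1
      have h2 := ih (m+1)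
      have h3 : (Finset.univ.filter
          (fun i : V => t+1 ≤ G.dist z i ∧ t+1 ≤ G.dist o i ∧ G.dist o i = m)).card
          ≤ (Finset.univ.filter (fun j : V => G.dist o j = m)).card := by
        apply Finset.card_le_card
        intro i hi
        rw [Finset.mem_filter] at hi ⊢
        exact ⟨hi.1, hi.2.2.2⟩
      have h4 := A_step m
      omega
  -- I0 aggregate bound
  have H_bound : ∀ t m : ℕ, m < t →
      ∑ i ∈ Finset.univ.filter (fun i => G.dist z i = m), a t i
      ≤ (Finset.univ.filter (fun j => m ≤ G.dist z j)).card + Fintype.card V := by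
    intro t
    induction t with
    | zero => intro m hm; omega
    | succ t ih =>
      intro m hm
      have hrw : ∀ i ∈ Finset.univ.filter (fun i => G.dist z i = m), a (t+1) i
          = 1 + ∑ j ∈ Finset.univ.filter
              (fun j => c t j = i ∧ dh t j = dh (t+1) i + 1), a t j := by
        intro i _
        simpa using ha (t+1) i
      rw [Finset.sum_congr rfl hrw, Finset.sum_add_distrib, Finset.sum_const, smul_eq_mul,
        mul_one]
      have hdisj : (↑(Finset.univ.filter (fun i : V => G.dist z i = m)) : Set V).PairwiseDisjoint
          (fun i => Finset.univ.filter (fun j => c t j = i ∧ dh t j = dh (t+1) i + 1)) := by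
        intro x _ y _ hxy
        rw [Function.onFun, Finset.disjoint_left]
        intro j hj1 hj2
        rw [Finset.mem_filter] at hj1 hj2
        exact hxy (hj1.2.1.symm.trans hj2.2.1)
      rw [← Finset.sum_biUnion hdisj]
      have hBdh : ∀ j ∈ (Finset.univ.filter (fun i : V => G.dist z i = m)).biUnion
          (fun i => Finset.univ.filter (fun j => c t j = i ∧ dh t j = dh (t+1) i + 1)),
          dh t j = m + 1 := by
        intro j hj
        rw [Finset.mem_biUnion] at hj
        obtain ⟨i, hiS, hjC⟩ := hj
        rw [Finset.mem_filter] at hiS hjC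
        have hdhi : dh (t+1) i = m := by
          have h1 := ubz (t+1) i (by omega)
          have h2 := lb (t+1) i
          omega
        omega
      have hcardz : (Finset.univ.filter (fun i : V => G.dist z i = m)).card
          ≤ (Finset.univ.filter (fun j : V => m ≤ G.dist z j)).card := by
        apply Finset.card_le_card
        intro i hi
        rw [Finset.mem_filter] at hi ⊢
        exact ⟨hi.1, by omega⟩
      by_cases hfront : t ≤ m + 1
      · -- frontier case
        have hBz : ∀ j ∈ (Finset.univ.filter (fun i : V => G.dist z i = m)).biUnion
            (fun i => Finset.univ.filter (fun j => c t j = i ∧ dh t j = dh (t+1) i + 1)),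
            t ≤ G.dist z j := by
          intro j hj
          by_contra hcon
          push_neg at hcon
          have h1 := ubz t j hcon
          have h2 := lb t j
          have h3 := hBdh j hj
          omega
        rw [← Finset.sum_filter_add_sum_filter_not
          ((Finset.univ.filter (fun i : V => G.dist z i = m)).biUnion
            (fun i => Finset.univ.filter (fun j => c t j = i ∧ dh t j = dh (t+1) i + 1)))
          (fun j => G.dist o j < t) (fun j => a t j)]
        have hone : ∀ j ∈ ((Finset.univ.filter (fun i : V => G.dist z i = m)).biUnion
            (fun i => Finset.univ.filter (fun j => c t j = i ∧ dh t j = dh (t+1) i + 1))).filter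
            (fun j => G.dist o j < t), a t j = 1 := by
          intro j hj
          rw [Finset.mem_filter] at hj
          exact oneI1 t (by omega) j hj.2 (hBz j hj.1)
        rw [Finset.sum_congr rfl hone, Finset.sum_const, smul_eq_mul, mul_one]
        have hc1 : (((Finset.univ.filter (fun i : V => G.dist z i = m)).biUnion
            (fun i => Finset.univ.filter (fun j => c t j = i ∧ dh t j = dh (t+1) i + 1))).filter
            (fun j => G.dist o j < t)).card
            ≤ (Finset.univ.filter (fun j : V => G.dist o j < m+1)).card := by
          apply Finset.card_le_card
          intro j hj
          rw [Finset.mem_filter] at hj ⊢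
          exact ⟨Finset.mem_univ _, by omega⟩
        have hsub2 : ((Finset.univ.filter (fun i : V => G.dist z i = m)).biUnion
            (fun i => Finset.univ.filter (fun j => c t j = i ∧ dh t j = dh (t+1) i + 1))).filter
            (fun j => ¬ G.dist o j < t)
            ⊆ Finset.univ.filter
              (fun i => t ≤ G.dist z i ∧ t ≤ G.dist o i ∧ G.dist o i = m+1) := by
          intro j hj
          rw [Finset.mem_filter] at hj
          have hzj := hBz j hj.1
          have hdj := hBdh j hj.1
          have hoj : t ≤ G.dist o j := by omega
          have heq := eqI2 t j hzj hoj
          rw [Finset.mem_filter]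
          exact ⟨Finset.mem_univ _, hzj, hoj, by omega⟩
        have h5 := Finset.sum_le_sum_of_subset (f := fun j => a t j) hsub2
        beta_reduce at h5
        have h6 := F_bound t (m+1)
        have h7 := Acard (m+1)
        omega
      · -- interior case
        push_neg at hfront
        have hsub : (Finset.univ.filter (fun i : V => G.dist z i = m)).biUnion
            (fun i => Finset.univ.filter (fun j => c t j = i ∧ dh t j = dh (t+1) i + 1))
            ⊆ Finset.univ.filter (fun j : V => G.dist z j = m+1) := by
          intro j hj
          have h3 := hBdh j hj
          rw [Finset.mem_filter]
          refine ⟨Finset.mem_univ _, ?_⟩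
          by_cases hzj : G.dist z j < t
          · have h1 := ubz t j hzj
            have h2 := lb t j
            omega
          · push_neg at hzj
            have h2 := lb t j
            omega
        have h5 := Finset.sum_le_sum_of_subset (f := fun j => a t j) hsub
        beta_reduce at h5
        have h6 := ih (m+1) (by omega)
        have h8 : (Finset.univ.filter (fun i : V => G.dist z i = m)).card
            + (Finset.univ.filter (fun j : V => m+1 ≤ G.dist z j)).card
            ≤ (Finset.univ.filter (fun j : V => m ≤ G.dist z j)).card := by
          have hd : Disjoint (Finset.univ.filter (fun i : V => G.dist z i = m))
              (Finset.univ.filter (fun j : V => m+1 ≤ G.dist z j)) := by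
            rw [Finset.disjoint_left]
            intro j h1 h2
            rw [Finset.mem_filter] at h1 h2
            omega
          rw [← Finset.card_union_of_disjoint hd]
          apply Finset.card_le_card
          intro j hj
          rw [Finset.mem_union, Finset.mem_filter, Finset.mem_filter] at hj
          rw [Finset.mem_filter]
          rcases hj with h | h
          · exact ⟨h.1, by omega⟩
          · exact ⟨h.1, by omega⟩
        omega
  -- conclusion
  intro t ht i
  refine ⟨?_, fun h1 h2 => oneI1 t ht i h1 h2, ?_⟩
  · intro h
    have hmem : i ∈ Finset.univ.filter (fun j => G.dist z j = G.dist z i) := by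
      simp
    have h1 : a t i ≤ ∑ j ∈ Finset.univ.filter (fun j => G.dist z j = G.dist z i), a t j :=
      Finset.single_le_sum (fun j _ => Nat.zero_le _) hmem
    have h2 := H_bound t (G.dist z i) h
    have h3 : (Finset.univ.filter (fun j : V => G.dist z i ≤ G.dist z j)).card
        ≤ Fintype.card V := by
      calc (Finset.univ.filter (fun j : V => G.dist z i ≤ G.dist z j)).card
          ≤ Finset.univ.card := Finset.card_filter_le _ _
        _ = Fintype.card V := Finset.card_univ
    omega
  · intro h1 h2
    have hmem : i ∈ Finset.univ.filter
        (fun j => t ≤ G.dist z j ∧ t ≤ G.dist o j ∧ G.dist o j = G.dist o i) := by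
      rw [Finset.mem_filter]
      exact ⟨Finset.mem_univ _, h1, h2, rfl⟩
    have hle : a t i ≤ ∑ j ∈ Finset.univ.filter
        (fun j => t ≤ G.dist z j ∧ t ≤ G.dist o j ∧ G.dist o j = G.dist o i), a t j :=
      Finset.single_le_sum (fun j _ => Nat.zero_le _) hmem
    have hF := F_bound t (G.dist o i)
    have hA := hlevel (G.dist o i)
    omega
end
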